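/- arXiv:1709.02013 — 4 statements merged into one kernel-verified Lean document; each statement's English description precedes it below -/
import Mathlib

section
/- If X is a nonempty set of vertices of the n-dimensional hypercube Q_n such that every vertex of X has at least h neighbors inside X (where 0 ≤ h ≤ n), then |X| ≥ 2^h. -/
/-- The hypercube graph on `Fin n → Bool`: adjacency = Hamming distance 1. -/
def Qn (n : ℕ) : SimpleGraph (Fin n → Bool) where
  Adj x y := (Finset.univ.filter fun i => x i ≠ y i).card = 1
  symm := by
    constructor
    intro x y h
    convert h using 2
    ext i
    simp [ne_comm]
  loopless := by
    constructor
    intro x h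
    simp at h

/-- Bitwise complement. -/
def bcomp (n : ℕ) (x : Fin n → Bool) : Fin n → Bool := fun i => !(x i)

/-- Crossing-edge adjacency in HCN_n. -/
def CAdj (n : ℕ) (u v : (Fin n → Bool) × (Fin n → Bool)) : Prop :=
  (u.1 ≠ u.2 ∧ v = (u.2, u.1)) ∨
  (u.1 = u.2 ∧ v = (bcomp n u.1, bcomp n u.1)) ∨
  (v.1 ≠ v.2 ∧ u = (v.2, v.1)) ∨
  (v.1 = v.2 ∧ u = (bcomp n v.1, bcomp n v.1))

/-- The hierarchical cubic network HCN_n. -/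
def HCN (n : ℕ) : SimpleGraph ((Fin n → Bool) × (Fin n → Bool)) where
  Adj u v := u ≠ v ∧ ((u.1 = v.1 ∧ (Qn n).Adj u.2 v.2) ∨ CAdj n u v)
  symm := by
    constructor
    rintro u v ⟨hne, h⟩
    refine ⟨hne.symm, ?_⟩
    rcases h with ⟨h1, h2⟩ | h | h | h | h
    · exact Or.inl ⟨h1.symm, h2.symm⟩
    · exact Or.inr (Or.inr (Or.inr (Or.inl h)))
    · exact Or.inr (Or.inr (Or.inr (Or.inr h)))
    · exact Or.inr (Or.inl h)
    · exact Or.inr (Or.inr (Or.inl h))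
  loopless := by constructor; intro u h; exact h.1 rfl

namespace HCNaux
open Finset
open scoped Classical
variable {n : ℕ}

def tl (x : Fin (n+1) → Bool) : Fin n → Bool := fun i => x i.succ

lemma tl_inj {x y : Fin (n+1) → Bool} (h0 : x 0 = y 0) (ht : tl x = tl y) : x = y := by
  funext i
  induction i using Fin.cases with
  | zero => exact h0
  | succ j => exact congrFun ht j

lemma card_diff_succ (x y : Fin (n+1) → Bool) :
    (Finset.univ.filter fun i => x i ≠ y i).card
      = (if x 0 ≠ y 0 then 1 else 0) + (Finset.univ.filter fun i => tl x i ≠ tl y i).card := by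
  rw [Finset.card_filter, Finset.card_filter, Fin.sum_univ_succ]
  rfl

lemma adj_iff (x y : Fin (n+1) → Bool) :
    (Qn (n+1)).Adj x y ↔
      (x 0 = y 0 ∧ (Qn n).Adj (tl x) (tl y)) ∨ (x 0 ≠ y 0 ∧ tl x = tl y) := by
  show (Finset.univ.filter fun i => x i ≠ y i).card = 1 ↔ _
  rw [card_diff_succ]
  by_cases h0 : x 0 = y 0
  · rw [if_neg (by simpa using h0)]
    constructor
    · intro h; exact Or.inl ⟨h0, by show (Finset.univ.filter fun i => tl x i ≠ tl y i).card = 1; simpa using h⟩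
    · rintro (⟨_, h⟩ | ⟨h, _⟩)
      · change (Finset.univ.filter fun i => tl x i ≠ tl y i).card = 1 at h; simpa using h
      · exact absurd h0 h
  · rw [if_pos h0]
    constructor
    · intro h
      refine Or.inr ⟨h0, ?_⟩
      have hc : (Finset.univ.filter fun i => tl x i ≠ tl y i).card = 0 := by omega
      rw [Finset.card_eq_zero] at hc
      funext i
      by_contra hne
      have : i ∈ (Finset.univ.filter fun i => tl x i ≠ tl y i) := by simp [hne]
      simp [hc] at this
    · rintro (⟨h, _⟩ | ⟨_, h⟩)
      · exact absurd h h0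
      · have : (Finset.univ.filter fun i => tl x i ≠ tl y i) = ∅ := by
          apply Finset.filter_eq_empty_iff.2
          intro i _
          simp [h]
        simp [this]

lemma adj_exists_update {x y : Fin n → Bool} (h : (Qn n).Adj x y) :
    ∃ i, y = Function.update x i (!(x i)) := by
  obtain ⟨i, hi⟩ := Finset.card_eq_one.1 h
  refine ⟨i, ?_⟩
  funext j
  by_cases hj : j = i
  · subst hj
    have : j ∈ (Finset.univ.filter fun k => x k ≠ y k) := by rw [hi]; simp
    simp only [Finset.mem_filter] at this
    rcases this with ⟨_, hne⟩
    simp only [Function.update_self]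
    cases hx : x j <;> cases hy : y j <;> simp_all
  · have : j ∉ (Finset.univ.filter fun k => x k ≠ y k) := by rw [hi]; simp [hj]
    simp only [Finset.mem_filter, Finset.mem_univ, true_and, not_not] at this
    simp [Function.update_of_ne hj, this]

lemma degree_le (x : Fin n → Bool) :
    (Finset.univ.filter fun y => (Qn n).Adj x y).card ≤ n := by
  have hsub : (Finset.univ.filter fun y => (Qn n).Adj x y)
      ⊆ Finset.univ.image (fun i : Fin n => Function.update x i (!(x i))) := by
    intro y hy
    simp only [Finset.mem_filter] at hy
    obtain ⟨i, hi⟩ := adj_exists_update hy.2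
    exact Finset.mem_image.2 ⟨i, Finset.mem_univ i, hi.symm⟩
  calc _ ≤ _ := Finset.card_le_card hsub
    _ ≤ (Finset.univ : Finset (Fin n)).card := Finset.card_image_le
    _ = n := by simp

lemma same_part_card (X : Finset (Fin (n+1) → Bool)) (b : Bool) (x : Fin (n+1) → Bool)
    (hxb : x 0 = b) :
    (X.filter fun y => y 0 = b ∧ (Qn (n+1)).Adj x y).card
      ≤ (((X.filter fun y => y 0 = b).image tl).filter fun ty => (Qn n).Adj (tl x) ty).card := by
  apply Finset.card_le_card_of_injOn tl
  · intro y hy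
    simp only [Finset.mem_coe, Finset.mem_filter] at hy ⊢
    obtain ⟨hyX, hyb, hadj⟩ := hy
    constructor
    · exact Finset.mem_image.2 ⟨y, Finset.mem_filter.2 ⟨hyX, hyb⟩, rfl⟩
    · rcases (adj_iff x y).1 hadj with ⟨_, h⟩ | ⟨h0, _⟩
      · exact h
      · exact absurd (hxb.trans hyb.symm) h0
  · intro y hy z hz ht
    simp only [Finset.coe_filter, Set.mem_setOf_eq] at hy hz
    exact tl_inj (hy.2.1.trans hz.2.1.symm) ht

lemma cross_card (X : Finset (Fin (n+1) → Bool)) (x : Fin (n+1) → Bool) :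
    (X.filter fun y => ¬(y 0 = x 0) ∧ (Qn (n+1)).Adj x y).card ≤ 1 := by
  apply Finset.card_le_one.2
  intro y hy z hz
  simp only [Finset.mem_filter] at hy hz
  obtain ⟨_, hy0, hya⟩ := hy
  obtain ⟨_, hz0, hza⟩ := hz
  have hty : tl x = tl y := by
    rcases (adj_iff x y).1 hya with ⟨h, _⟩ | ⟨_, h⟩
    · exact absurd h.symm hy0
    · exact h
  have htz : tl x = tl z := by
    rcases (adj_iff x z).1 hza with ⟨h, _⟩ | ⟨_, h⟩
    · exact absurd h.symm hz0
    · exact h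
  have h0 : y 0 = z 0 := by
    cases hx0 : x 0 <;> simp [hx0] at hy0 hz0 <;> simp [hy0, hz0]
  exact tl_inj h0 (hty.symm.trans htz)

lemma deg_split (X : Finset (Fin (n+1) → Bool)) (x : Fin (n+1) → Bool) :
    (X.filter fun y => (Qn (n+1)).Adj x y).card
      ≤ (X.filter fun y => y 0 = x 0 ∧ (Qn (n+1)).Adj x y).card + 1 := by
  have hsub : (X.filter fun y => (Qn (n+1)).Adj x y)
      ⊆ (X.filter fun y => y 0 = x 0 ∧ (Qn (n+1)).Adj x y)
        ∪ (X.filter fun y => ¬(y 0 = x 0) ∧ (Qn (n+1)).Adj x y) := by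
    intro y hy
    simp only [Finset.mem_filter] at hy
    by_cases h0 : y 0 = x 0
    · exact Finset.mem_union_left _ (Finset.mem_filter.2 ⟨hy.1, h0, hy.2⟩)
    · exact Finset.mem_union_right _ (Finset.mem_filter.2 ⟨hy.1, h0, hy.2⟩)
  have h1 := Finset.card_le_card hsub
  have h2 := Finset.card_union_le (X.filter fun y => y 0 = x 0 ∧ (Qn (n+1)).Adj x y)
    (X.filter fun y => ¬(y 0 = x 0) ∧ (Qn (n+1)).Adj x y)
  have h3 := cross_card X x
  exact h1.trans (h2.trans (Nat.add_le_add_left h3 _))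

lemma card_image_tl (X : Finset (Fin (n+1) → Bool)) (b : Bool) :
    ((X.filter fun y => y 0 = b).image tl).card = (X.filter fun y => y 0 = b).card := by
  apply Finset.card_image_of_injOn
  intro y hy z hz ht
  simp only [Finset.coe_filter, Set.mem_setOf_eq] at hy hz
  exact tl_inj (hy.2.trans hz.2.symm) ht

lemma main : ∀ (n h : ℕ) (X : Finset (Fin n → Bool)), X.Nonempty →
    (∀ x ∈ X, h ≤ (X.filter (fun y => (Qn n).Adj x y)).card) → 2 ^ h ≤ X.card := by
  intro n
  induction n with
  | zero =>
    intro h X hX hdeg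
    obtain ⟨x, hx⟩ := hX
    have h0 : h = 0 := by
      have hemp : (X.filter (fun y => (Qn 0).Adj x y)) = ∅ := by
        apply Finset.filter_eq_empty_iff.2
        intro y _
        show ¬ (Finset.univ.filter fun i => x i ≠ y i).card = 1
        have huniv : (Finset.univ : Finset (Fin 0)) = ∅ := rfl
        simp [huniv]
      have := hdeg x hx
      rw [hemp] at this
      simpa using this
    subst h0
    simpa using Finset.card_pos.2 ⟨x, hx⟩
  | succ n ih =>
    intro h X hX hdeg
    set Y : Bool → Finset (Fin n → Bool) := fun b => (X.filter fun y => y 0 = b).image tl with hY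
    by_cases hboth : ∀ b, (X.filter fun y => y 0 = b).Nonempty
    · -- both parts nonempty
      cases h with
      | zero => simpa using Finset.card_pos.2 hX
      | succ h' =>
        have hYdeg : ∀ b, ∀ ty ∈ Y b, h' ≤ ((Y b).filter fun tz => (Qn n).Adj ty tz).card := by
          intro b ty hty
          obtain ⟨x, hxmem, rfl⟩ := Finset.mem_image.1 hty
          rw [Finset.mem_filter] at hxmem
          obtain ⟨hxX, hxb⟩ := hxmem
          have h1 := hdeg x hxX
          have h2 := deg_split X x
          have h3 := same_part_card X b x hxb
          rw [hxb] at h2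
          exact (Nat.succ_le_succ_iff.1 (h1.trans h2)).trans h3
        have hYne : ∀ b, (Y b).Nonempty := fun b => ((hboth b).image tl)
        have hc : ∀ b, 2 ^ h' ≤ (Y b).card := fun b => ih h' (Y b) (hYne b) (hYdeg b)
        have hcard : X.card = (X.filter fun y => y 0 = false).card + (X.filter fun y => y 0 = true).card := by
          rw [← Finset.card_filter_add_card_filter_not (p := fun y => y 0 = false)]
          congr 2
          ext y
          simp
        have hf := hc false
        have ht := hc true
        rw [card_image_tl] at hf ht
        rw [hcard]
        have hp : (2:ℕ) ^ (h' + 1) = 2 ^ h' + 2 ^ h' := by ring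
        rw [hp]
        exact Nat.add_le_add hf ht
    · -- one part empty
      push_neg at hboth
      obtain ⟨b', hb'⟩ := hboth
      have hall : ∀ y ∈ X, y 0 = !b' := by
        intro y hy
        by_contra hne
        have : y 0 = b' := by cases hb : y 0 <;> cases b' <;> simp_all
        have : y ∈ X.filter fun y => y 0 = b' := Finset.mem_filter.2 ⟨hy, this⟩
        simp [hb'] at this
      set b := !b' with hbdef
      have hYdeg : ∀ ty ∈ Y b, h ≤ ((Y b).filter fun tz => (Qn n).Adj ty tz).card := by
        intro ty hty
        obtain ⟨x, hxmem, rfl⟩ := Finset.mem_image.1 hty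
        rw [Finset.mem_filter] at hxmem
        obtain ⟨hxX, hxb⟩ := hxmem
        have h1 := hdeg x hxX
        have h3 := same_part_card X b x hxb
        have heq : (X.filter fun y => y 0 = b ∧ (Qn (n+1)).Adj x y)
            = X.filter fun y => (Qn (n+1)).Adj x y := by
          apply Finset.filter_congr
          intro y hy
          simp [hall y hy]
        rw [heq] at h3
        exact h1.trans h3
      have hYne : (Y b).Nonempty := by
        obtain ⟨x, hx⟩ := hX
        exact ⟨tl x, Finset.mem_image.2 ⟨x, Finset.mem_filter.2 ⟨hx, hall x hx⟩, rfl⟩⟩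
      have := ih h (Y b) hYne hYdeg
      rw [card_image_tl] at this
      exact this.trans (Finset.card_le_card (Finset.filter_subset _ _))

end HCNaux

open scoped Classical in
/-- If every vertex of a nonempty set X in Q_n has at least h neighbors inside X
(0 ≤ h ≤ n), then |X| ≥ 2^h. -/
theorem stmt0 (n h : ℕ) (hh : h ≤ n) (X : Finset (Fin n → Bool)) (hX : X.Nonempty)
    (hdeg : ∀ x ∈ X, h ≤ (X.filter (fun y => (Qn n).Adj x y)).card) :
    2 ^ h ≤ X.card := by
  exact HCNaux.main n h X hX hdeg
end

section
/- If X is a nonempty set of vertices of the n-dimensional hypercube Q_n (n ≥ 1) such that every vertex of X has at least h neighbors inside X, where 0 ≤ h ≤ n−1, then |X| + |N(X)| ≥ 2^h·(n−h), where N(X) is the set of vertices outside X having a neighbor in X. -/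
section Aux
open Finset
open scoped Classical

/-- abbreviation for cons with the right type -/
def bc {n : ℕ} (a : Bool) (z : Fin n → Bool) : Fin (n+1) → Bool := Fin.cons a z

@[simp] lemma bc_zero {n : ℕ} (a : Bool) (z : Fin n → Bool) : bc a z 0 = a := rfl
@[simp] lemma bc_succ {n : ℕ} (a : Bool) (z : Fin n → Bool) (i : Fin n) : bc a z i.succ = z i := rfl
@[simp] lemma tail_bc {n : ℕ} (a : Bool) (z : Fin n → Bool) : Fin.tail (bc a z) = z := rfl
lemma bc_self_tail {n : ℕ} (x : Fin (n+1) → Bool) : bc (x 0) (Fin.tail x) = x :=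
  Fin.cons_self_tail x
lemma bc_inj {n : ℕ} (a : Bool) : Function.Injective (bc (n := n) a) := by
  intro z w h
  have := congrArg Fin.tail h
  simpa using this

lemma card_diff_cons {n : ℕ} (a b : Bool) (z w : Fin n → Bool) :
    (univ.filter fun i => bc a z i ≠ bc b w i).card
      = (if a = b then 0 else 1) + (univ.filter fun i => z i ≠ w i).card := by
  rw [Finset.card_filter, Finset.card_filter, Fin.sum_univ_succ]
  simp only [bc_zero, bc_succ]
  by_cases h : a = b <;> simp [h] <;> exact Finset.sum_congr rfl fun x _ => by split_ifs <;> simp_all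

lemma adj_cons_iff {n : ℕ} (a b : Bool) (z w : Fin n → Bool) :
    (Qn (n+1)).Adj (bc a z) (bc b w) ↔
      (a = b ∧ (Qn n).Adj z w) ∨ (a ≠ b ∧ z = w) := by
  show (univ.filter fun i => bc a z i ≠ bc b w i).card = 1 ↔ _
  rw [card_diff_cons]
  by_cases h : a = b
  · subst h
    rw [if_pos rfl, zero_add]
    constructor
    · intro hc; exact Or.inl ⟨rfl, hc⟩
    · rintro (⟨_, hc⟩ | ⟨hne, _⟩); · exact hc
      · exact absurd rfl hne
  · simp only [if_neg h]
    constructor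
    · intro hc
      have h0 : (univ.filter fun i => z i ≠ w i).card = 0 := by omega
      refine Or.inr ⟨h, funext fun i => ?_⟩
      rw [Finset.card_eq_zero, Finset.filter_eq_empty_iff] at h0
      have := h0 (Finset.mem_univ i)
      simpa using this
    · rintro (⟨hab, _⟩ | ⟨_, hzw⟩); · exact absurd hab h
      · subst hzw; simp

lemma bool_ne_iff {a b : Bool} : a ≠ b ↔ a = !b := by
  cases a <;> cases b <;> simp

lemma qn_degree {n : ℕ} (x : Fin n → Bool) :
    (univ.filter fun y => (Qn n).Adj x y).card = n := by
  have := Finset.card_bij (s := (univ : Finset (Fin n)))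
    (t := univ.filter fun y => (Qn n).Adj x y)
    (fun i _ => Function.update x i (!(x i))) ?_ ?_ ?_
  · rw [← this]; simp
  · intro i _
    rw [Finset.mem_filter]
    refine ⟨Finset.mem_univ _, ?_⟩
    show (univ.filter fun j => x j ≠ Function.update x i (!(x i)) j).card = 1
    have : (univ.filter fun j => x j ≠ Function.update x i (!(x i)) j) = {i} := by
      ext j
      by_cases h : j = i
      · subst h; simp [Function.update_self]
      · simp [Function.update_of_ne h, h]
    rw [this]; simp
  · intro i _ i' _ hii
    by_contra hne
    have h1 := congrFun hii i
    rw [Function.update_self, Function.update_of_ne hne] at h1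
    exact (by simp : ¬ (!(x i)) = x i) h1
  · intro y hy
    rw [Finset.mem_filter] at hy
    have hc : (univ.filter fun j => x j ≠ y j).card = 1 := hy.2
    obtain ⟨i, hi⟩ := Finset.card_eq_one.mp hc
    refine ⟨i, Finset.mem_univ _, ?_⟩
    funext j
    by_cases h : j = i
    · subst h
      have : x j ≠ y j := by
        have : j ∈ ({j} : Finset (Fin n)) := Finset.mem_singleton_self j
        rw [← hi, Finset.mem_filter] at this
        exact this.2
      rw [Function.update_self]
      exact (bool_ne_iff.mp this.symm).symm
    · have : j ∉ (univ.filter fun j => x j ≠ y j) := by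
        rw [hi]; simp [h]
      simp only [Finset.mem_filter, Finset.mem_univ, true_and, not_not] at this
      rw [Function.update_of_ne h]
      exact this


def side {n : ℕ} (b : Bool) (X : Finset (Fin (n+1) → Bool)) : Finset (Fin n → Bool) :=
  (X.filter fun x => x 0 = b).image Fin.tail

lemma mem_side {n : ℕ} {b : Bool} {X : Finset (Fin (n+1) → Bool)} {z : Fin n → Bool} :
    z ∈ side b X ↔ bc b z ∈ X := by
  constructor
  · rintro hz
    rw [side, Finset.mem_image] at hz
    obtain ⟨x, hx, rfl⟩ := hz
    rw [Finset.mem_filter] at hx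
    rw [show b = x 0 from hx.2.symm, bc_self_tail]
    exact hx.1
  · intro h
    rw [side, Finset.mem_image]
    exact ⟨bc b z, Finset.mem_filter.mpr ⟨h, rfl⟩, rfl⟩

lemma card_side {n : ℕ} (b : Bool) (X : Finset (Fin (n+1) → Bool)) :
    (side b X).card = (X.filter fun x => x 0 = b).card := by
  rw [side]
  apply Finset.card_image_of_injOn
  intro x hx y hy hxy
  rw [Finset.mem_coe, Finset.mem_filter] at hx hy
  rw [← bc_self_tail x, ← bc_self_tail y, hx.2, hy.2, hxy]

lemma card_split {n : ℕ} (X : Finset (Fin (n+1) → Bool)) :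
    X.card = (side false X).card + (side true X).card := by
  rw [card_side, card_side]
  rw [← Finset.card_filter_add_card_filter_not (s := X) (p := fun x => x 0 = false)]
  congr 1
  congr 1
  ext x
  cases h : x 0 <;> simp [h]

lemma deg_side {n : ℕ} (X : Finset (Fin (n+1) → Bool)) (c : Bool) (z : Fin n → Bool) :
    ((side c X).filter fun w => (Qn n).Adj z w).card
      = (X.filter fun y => (Qn (n+1)).Adj (bc c z) y ∧ y 0 = c).card := by
  apply Finset.card_bij (fun w _ => bc c w)
  · intro w hw
    rw [Finset.mem_filter] at hw
    rw [Finset.mem_filter]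
    refine ⟨mem_side.mp hw.1, ?_, rfl⟩
    rw [adj_cons_iff]
    exact Or.inl ⟨rfl, hw.2⟩
  · intro w _ w' _ h
    exact bc_inj c h
  · intro y hy
    rw [Finset.mem_filter] at hy
    obtain ⟨hyX, hadj, hy0⟩ := hy
    refine ⟨Fin.tail y, ?_, ?_⟩
    · rw [Finset.mem_filter]
      constructor
      · rw [mem_side, ← hy0, bc_self_tail]; exact hyX
      · rw [← bc_self_tail y, hy0] at hadj
        rcases (adj_cons_iff c c z (Fin.tail y)).mp hadj with ⟨_, h⟩ | ⟨hne, _⟩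
        · exact h
        · exact absurd rfl hne
    · rw [← hy0, bc_self_tail]

lemma cross_subset {n : ℕ} (X : Finset (Fin (n+1) → Bool)) (c : Bool) (z : Fin n → Bool) :
    (X.filter fun y => (Qn (n+1)).Adj (bc c z) y ∧ y 0 ≠ c) ⊆ {bc (!c) z} := by
  intro y hy
  rw [Finset.mem_filter] at hy
  obtain ⟨hyX, hadj, hy0⟩ := hy
  have hy0' : y 0 = !c := by
    cases hc : c <;> cases hy' : y 0 <;> simp_all
  rw [← bc_self_tail y, hy0'] at hadj
  rcases (adj_cons_iff c (!c) z (Fin.tail y)).mp hadj with ⟨he, _⟩ | ⟨_, hzw⟩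
  · exact absurd he (by cases c <;> simp)
  · rw [Finset.mem_singleton, hzw, ← hy0']
    exact (bc_self_tail y).symm

lemma deg_split {n : ℕ} (X : Finset (Fin (n+1) → Bool)) (c : Bool) (z : Fin n → Bool) :
    (X.filter fun y => (Qn (n+1)).Adj (bc c z) y).card
      = (X.filter fun y => (Qn (n+1)).Adj (bc c z) y ∧ y 0 = c).card
        + (X.filter fun y => (Qn (n+1)).Adj (bc c z) y ∧ y 0 ≠ c).card := by
  conv_lhs => rw [← Finset.card_filter_add_card_filter_not
    (s := X.filter fun y => (Qn (n+1)).Adj (bc c z) y) (p := fun y => y 0 = c)]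
  rw [Finset.filter_filter, Finset.filter_filter]

lemma deg_le_n {n : ℕ} (X : Finset (Fin n → Bool)) (x : Fin n → Bool) :
    (X.filter fun y => (Qn n).Adj x y).card ≤ n := by
  calc (X.filter fun y => (Qn n).Adj x y).card
      ≤ (univ.filter fun y => (Qn n).Adj x y).card := by
        apply Finset.card_le_card
        intro y hy
        rw [Finset.mem_filter] at hy ⊢
        exact ⟨Finset.mem_univ _, hy.2⟩
    _ = n := qn_degree x

lemma side_deg {n : ℕ} {X : Finset (Fin (n+1) → Bool)} {k : ℕ} (c : Bool) (z : Fin n → Bool)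
    (hk : k ≤ (X.filter fun y => (Qn (n+1)).Adj (bc c z) y).card) :
    k ≤ ((side c X).filter fun w => (Qn n).Adj z w).card + 1 := by
  rw [deg_split] at hk
  rw [deg_side]
  have h1 := Finset.card_le_card (cross_subset X c z)
  simp only [Finset.card_singleton] at h1
  exact hk.trans (Nat.add_le_add_left h1 _)

lemma side_deg_empty {n : ℕ} {X : Finset (Fin (n+1) → Bool)} {k : ℕ} (c : Bool)
    (z : Fin n → Bool) (hempty : side (!c) X = ∅)
    (hk : k ≤ (X.filter fun y => (Qn (n+1)).Adj (bc c z) y).card) :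
    k ≤ ((side c X).filter fun w => (Qn n).Adj z w).card := by
  rw [deg_split] at hk
  rw [deg_side]
  have hc : (X.filter fun y => (Qn (n+1)).Adj (bc c z) y ∧ y 0 ≠ c) = ∅ := by
    rw [Finset.eq_empty_iff_forall_notMem]
    intro y hy
    have h1 := cross_subset X c z hy
    rw [Finset.mem_singleton] at h1
    rw [Finset.mem_filter] at hy
    have heq : bc (!c) (Fin.tail y) = y := by rw [h1]; simp [bc]
    have : Fin.tail y ∈ side (!c) X := by
      rw [mem_side, heq]; exact hy.1
    rw [hempty] at this
    exact absurd this (Finset.notMem_empty _)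
  rw [hc] at hk
  simpa using hk

lemma side_nonempty {n : ℕ} {X : Finset (Fin (n+1) → Bool)} (hX : X.Nonempty) (b : Bool)
    (hempty : side (!b) X = ∅) : (side b X).Nonempty := by
  obtain ⟨x, hx⟩ := hX
  refine ⟨Fin.tail x, ?_⟩
  rw [mem_side]
  have : x 0 = b := by
    by_contra hb
    have hx0 : x 0 = !b := by cases hb' : x 0 <;> cases b <;> simp_all
    have : Fin.tail x ∈ side (!b) X := by
      rw [mem_side, ← hx0, bc_self_tail]; exact hx
    rw [hempty] at this
    exact absurd this (Finset.notMem_empty _)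
  rw [← this, bc_self_tail]
  exact hx

lemma cardLB : ∀ n h : ℕ, ∀ X : Finset (Fin n → Bool), X.Nonempty → h ≤ n →
    (∀ x ∈ X, h ≤ (X.filter fun y => (Qn n).Adj x y).card) → 2 ^ h ≤ X.card := by
  intro n
  induction n with
  | zero =>
    intro h X hX hh _
    interval_cases h
    simpa using Finset.card_pos.mpr hX
  | succ m ih =>
    intro h X hX hh hdeg
    match h with
    | 0 => simpa using Finset.card_pos.mpr hX
    | (h' + 1) =>
      by_cases hboth : (side false X).Nonempty ∧ (side true X).Nonempty
      · have key : ∀ b : Bool, 2 ^ h' ≤ (side b X).card := by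
          intro b
          apply ih h' (side b X) (by cases b; exacts [hboth.1, hboth.2]) (by omega)
          intro z hz
          have hzx : bc b z ∈ X := mem_side.mp hz
          have := side_deg b z (hdeg _ hzx)
          omega
        rw [card_split]
        have h1 := key false
        have h2 := key true
        rw [pow_succ]
        omega
      · rw [not_and_or] at hboth
        have : ∃ b : Bool, side (!b) X = ∅ := by
          rcases hboth with h1 | h1
          · exact ⟨true, by simpa using Finset.not_nonempty_iff_eq_empty.mp h1⟩
          · exact ⟨false, by simpa using Finset.not_nonempty_iff_eq_empty.mp h1⟩
        obtain ⟨b, hb⟩ := this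
        have hne := side_nonempty hX b hb
        have hdeg' : ∀ z ∈ side b X, h' + 1 ≤ ((side b X).filter fun w => (Qn m).Adj z w).card := by
          intro z hz
          exact side_deg_empty b z hb (hdeg _ (mem_side.mp hz))
        have hle : h' + 1 ≤ m := by
          obtain ⟨z, hz⟩ := hne
          have := hdeg' z hz
          have := deg_le_n (side b X) z
          omega
        have := ih (h' + 1) (side b X) hne hle hdeg'
        calc 2 ^ (h' + 1) ≤ (side b X).card := this
          _ ≤ X.card := by
            rw [card_side]
            exact Finset.card_le_card (Finset.filter_subset _ _)

lemma closed_eq_univ {n : ℕ} {Y : Finset (Fin n → Bool)}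
    (hcl : ∀ z ∈ Y, ∀ w, (Qn n).Adj z w → w ∈ Y) (hne : Y.Nonempty) : Y = univ := by
  obtain ⟨z, hz⟩ := hne
  have key : ∀ k : ℕ, ∀ w : Fin n → Bool,
      (univ.filter fun i => z i ≠ w i).card ≤ k → w ∈ Y := by
    intro k
    induction k with
    | zero =>
      intro w hw
      have hzw : z = w := by
        funext i
        by_contra hne'
        have : i ∈ univ.filter fun i => z i ≠ w i := by simp [hne']
        rw [Finset.card_eq_zero.mp (Nat.le_zero.mp hw)] at this
        exact absurd this (Finset.notMem_empty _)
      rwa [← hzw]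
    | succ k ihk =>
      intro w hw
      by_cases hle : (univ.filter fun i => z i ≠ w i).card ≤ k
      · exact ihk w hle
      · have hpos : 0 < (univ.filter fun i => z i ≠ w i).card := by omega
        obtain ⟨i, hi⟩ := Finset.card_pos.mp hpos
        rw [Finset.mem_filter] at hi
        set w' := Function.update w i (z i) with hw'
        have hfilt : (univ.filter fun j => z j ≠ w' j)
            = (univ.filter fun j => z j ≠ w j).erase i := by
          ext j
          rw [Finset.mem_erase, Finset.mem_filter, Finset.mem_filter]
          by_cases hj : j = i
          · subst hj
            simp [hw', Function.update_self]
          · simp [hw', Function.update_of_ne hj, hj]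
        have hcard : (univ.filter fun j => z j ≠ w' j).card ≤ k := by
          rw [hfilt]
          have := Finset.card_erase_of_mem (s := univ.filter fun j => z j ≠ w j)
            (Finset.mem_filter.mpr ⟨Finset.mem_univ i, hi.2⟩)
          omega
        have hw'Y : w' ∈ Y := ihk w' hcard
        apply hcl w' hw'Y w
        show (univ.filter fun j => w' j ≠ w j).card = 1
        have : (univ.filter fun j => w' j ≠ w j) = {i} := by
          ext j
          rw [Finset.mem_filter, Finset.mem_singleton]
          by_cases hj : j = i
          · subst hj
            simp only [Finset.mem_univ, true_and, hw', Function.update_self]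
            exact iff_of_true hi.2 trivial
          · simp only [Finset.mem_univ, true_and, hw', Function.update_of_ne hj]
            simp [hj]
        rw [this, Finset.card_singleton]
  apply Finset.eq_univ_iff_forall.mpr
  intro w
  exact key _ w le_rfl

noncomputable def Nset (n : ℕ) (X : Finset (Fin n → Bool)) : Finset (Fin n → Bool) :=
  univ.filter fun y => y ∉ X ∧ ∃ x ∈ X, (Qn n).Adj x y

lemma mem_Nset {n : ℕ} {X : Finset (Fin n → Bool)} {y : Fin n → Bool} :
    y ∈ Nset n X ↔ y ∉ X ∧ ∃ x ∈ X, (Qn n).Adj x y := by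
  rw [Nset, Finset.mem_filter]
  simp

lemma image_Nset_subset {m : ℕ} (X : Finset (Fin (m+1) → Bool)) (b : Bool) :
    (Nset m (side b X)).image (bc b) ⊆ Nset (m+1) X := by
  intro y hy
  rw [Finset.mem_image] at hy
  obtain ⟨w, hw, rfl⟩ := hy
  rw [mem_Nset] at hw ⊢
  obtain ⟨hwn, x', hx', hadj⟩ := hw
  constructor
  · intro hmem
    exact hwn (mem_side.mpr hmem)
  · refine ⟨bc b x', mem_side.mp hx', ?_⟩
    rw [adj_cons_iff]
    exact Or.inl ⟨rfl, hadj⟩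

lemma mirror_subset {m : ℕ} (X : Finset (Fin (m+1) → Bool)) (b : Bool)
    (hb : side b X = ∅) :
    ((side (!b) X).image (bc b)) ⊆ Nset (m+1) X := by
  intro y hy
  rw [Finset.mem_image] at hy
  obtain ⟨w, hw, rfl⟩ := hy
  rw [mem_Nset]
  constructor
  · intro hmem
    have : w ∈ side b X := mem_side.mpr hmem
    rw [hb] at this
    exact absurd this (Finset.notMem_empty _)
  · refine ⟨bc (!b) w, mem_side.mp hw, ?_⟩
    rw [adj_cons_iff]
    exact Or.inr ⟨by cases b <;> simp, rfl⟩

lemma disj_images {m : ℕ} (A B : Finset (Fin m → Bool)) (b : Bool) :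
    Disjoint (A.image (bc b)) (B.image (bc (!b))) := by
  rw [Finset.disjoint_left]
  intro y hyA hyB
  rw [Finset.mem_image] at hyA hyB
  obtain ⟨w, _, rfl⟩ := hyA
  obtain ⟨w', _, he⟩ := hyB
  have := congrFun he 0
  simp only [bc_zero] at this
  cases b <;> simp_all

lemma main : ∀ n h : ℕ, h ≤ n - 1 → ∀ X : Finset (Fin n → Bool), X.Nonempty →
    (∀ x ∈ X, h ≤ (X.filter fun y => (Qn n).Adj x y).card) →
    2 ^ h * (n - h) ≤ X.card + (Nset n X).card := by
  intro n
  induction n with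
  | zero =>
    intro h hh X _ _
    interval_cases h
    simp
  | succ m ih =>
    intro h hh X hX hdeg
    match h with
    | 0 =>
      obtain ⟨x, hx⟩ := hX
      have hsub : insert x (univ.filter fun y => (Qn (m+1)).Adj x y) ⊆ X ∪ Nset (m+1) X := by
        intro y hy
        rw [Finset.mem_insert] at hy
        rw [Finset.mem_union]
        rcases hy with rfl | hy
        · exact Or.inl hx
        · rw [Finset.mem_filter] at hy
          by_cases hyX : y ∈ X
          · exact Or.inl hyX
          · exact Or.inr (mem_Nset.mpr ⟨hyX, x, hx, hy.2⟩)
      have hcard : m + 2 = (insert x (univ.filter fun y => (Qn (m+1)).Adj x y)).card := by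
        rw [Finset.card_insert_of_notMem, qn_degree]
        rw [Finset.mem_filter]
        rintro ⟨-, hadj⟩
        exact (Qn (m+1)).loopless.irrefl x hadj
      have := Finset.card_le_card hsub
      have hu := Finset.card_union_le X (Nset (m+1) X)
      simp only [pow_zero, one_mul, Nat.sub_zero]
      omega
    | (h' + 1) =>
      have hm : h' + 1 ≤ m := by omega
      by_cases hboth : (side false X).Nonempty ∧ (side true X).Nonempty
      · have key : ∀ b : Bool,
            2 ^ h' * (m - h') ≤ (side b X).card + (Nset m (side b X)).card := by
          intro b
          apply ih h' (by omega) (side b X) (by cases b; exacts [hboth.1, hboth.2])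
          intro z hz
          have := side_deg b z (hdeg _ (mem_side.mp hz))
          omega
        have h1 := key false
        have h2 := key true
        have hXcard := card_split X
        have hNsub : (Nset m (side false X)).image (bc false)
            ∪ (Nset m (side true X)).image (bc true) ⊆ Nset (m+1) X := by
          apply Finset.union_subset (image_Nset_subset X false)
          exact image_Nset_subset X true
        have hNcard := Finset.card_le_card hNsub
        rw [Finset.card_union_of_disjoint (by simpa using disj_images _ _ false)] at hNcard
        rw [Finset.card_image_of_injective _ (bc_inj false),
          Finset.card_image_of_injective _ (bc_inj true)] at hNcard
        have heq : 2 ^ (h' + 1) * ((m + 1) - (h' + 1)) = 2 * (2 ^ h' * (m - h')) := by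
          rw [Nat.succ_sub_succ, pow_succ]
          ring
        rw [heq]
        omega
      · rw [not_and_or] at hboth
        have : ∃ b : Bool, side b X = ∅ := by
          rcases hboth with h1 | h1
          · exact ⟨false, Finset.not_nonempty_iff_eq_empty.mp h1⟩
          · exact ⟨true, Finset.not_nonempty_iff_eq_empty.mp h1⟩
        obtain ⟨b, hb⟩ := this
        set Y := side (!b) X with hY
        have hbb : side (!(!b)) X = ∅ := by rwa [Bool.not_not]
        have hne : Y.Nonempty := side_nonempty hX (!b) hbb
        have hdegY : ∀ z ∈ Y, h' + 1 ≤ (Y.filter fun w => (Qn m).Adj z w).card := by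
          intro z hz
          exact side_deg_empty (!b) z hbb (hdeg _ (mem_side.mp hz))
        have hYX : Y.card ≤ X.card := by
          rw [hY, card_side]
          exact Finset.card_le_card (Finset.filter_subset _ _)
        by_cases hcase : h' + 1 ≤ m - 1
        · have hIH := ih (h' + 1) hcase Y hne hdegY
          have hLB := cardLB m (h' + 1) Y hne hm hdegY
          have hNsub : (Nset m Y).image (bc (!b)) ∪ Y.image (bc b) ⊆ Nset (m+1) X := by
            apply Finset.union_subset (image_Nset_subset X (!b))
            exact mirror_subset X b hb
          have hNcard := Finset.card_le_card hNsub
          have hdisj : Disjoint ((Nset m Y).image (bc (!b))) (Y.image (bc b)) := by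
            have := disj_images Y (Nset m Y) b
            rw [disjoint_comm] at this
            exact this
          rw [Finset.card_union_of_disjoint hdisj,
            Finset.card_image_of_injective _ (bc_inj (!b)),
            Finset.card_image_of_injective _ (bc_inj b)] at hNcard
          have heq : 2 ^ (h' + 1) * ((m + 1) - (h' + 1))
              = 2 ^ (h' + 1) * (m - (h' + 1)) + 2 ^ (h' + 1) := by
            have h2 : (m + 1) - (h' + 1) = (m - (h' + 1)) + 1 := by omega
            rw [h2, Nat.mul_succ]
          rw [heq]
          omega
        · have hm' : h' + 1 = m := by omega
          have hclosed : ∀ z ∈ Y, ∀ w, (Qn m).Adj z w → w ∈ Y := by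
            intro z hz w hadj
            have hsub : Y.filter (fun w => (Qn m).Adj z w)
                ⊆ univ.filter fun w => (Qn m).Adj z w := by
              intro v hv
              rw [Finset.mem_filter] at hv ⊢
              exact ⟨Finset.mem_univ _, hv.2⟩
            have hceq : Y.filter (fun w => (Qn m).Adj z w)
                = univ.filter fun w => (Qn m).Adj z w := by
              apply Finset.eq_of_subset_of_card_le hsub
              rw [qn_degree]
              have := hdegY z hz
              omega
            have : w ∈ Y.filter fun w => (Qn m).Adj z w := by
              rw [hceq, Finset.mem_filter]
              exact ⟨Finset.mem_univ _, hadj⟩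
            exact (Finset.mem_filter.mp this).1
          have hYuniv : Y = univ := closed_eq_univ hclosed hne
          have hYcard : Y.card = 2 ^ m := by
            rw [hYuniv]
            simp [Finset.card_univ]
          have heq : 2 ^ (h' + 1) * ((m + 1) - (h' + 1)) = 2 ^ m := by
            rw [hm']
            simp
          rw [heq]
          omega

end Aux

open scoped Classical in
/-- If every vertex of a nonempty X ⊆ Q_n has at least h neighbors in X (0 ≤ h ≤ n-1),
then |X| + |N(X)| ≥ 2^h (n - h). -/
theorem stmt1 (n h : ℕ) (hn : 1 ≤ n) (hh : h ≤ n - 1)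
    (X : Finset (Fin n → Bool)) (hX : X.Nonempty)
    (hdeg : ∀ x ∈ X, h ≤ (X.filter (fun y => (Qn n).Adj x y)).card) :
    2 ^ h * (n - h) ≤
      X.card + (Finset.univ.filter
        (fun y => y ∉ X ∧ ∃ x ∈ X, (Qn n).Adj x y)).card := by
  exact main n h hh X hX hdeg
end

section
/- Let n ≥ 2 and 0 ≤ h ≤ n−1. Then HCN_n has an h-vertex-cut of size 2^h·(n+1−h): there exists a set S of vertices with |S| = 2^h·(n+1−h) such that HCN_n − S is disconnected and every vertex of HCN_n − S has at least h neighbors in HCN_n − S. Hence κ^h(HCN_n) ≤ 2^h·(n+1−h). -/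
namespace S15
open Finset

def zV (n : ℕ) : Fin n → Bool := fun _ => false
def oV (n : ℕ) : Fin n → Bool := fun _ => true
def flp {n : ℕ} (i : Fin n) (y : Fin n → Bool) : Fin n → Bool :=
  fun j => if j = i then !(y j) else y j

open scoped Classical in
noncomputable def hiS (n h : ℕ) (y : Fin n → Bool) : Finset (Fin n) :=
  univ.filter fun i => h ≤ (i : ℕ) ∧ y i = true

def SP (n h : ℕ) (v : (Fin n → Bool) × (Fin n → Bool)) : Prop :=
  (v.1 = zV n ∧ (hiS n h v.2).card = 1) ∨
  (hiS n h v.1 = ∅ ∧ v.1 ≠ zV n ∧ v.2 = zV n) ∨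
  (v.1 = oV n ∧ v.2 = oV n)

open scoped Classical in
noncomputable def Scut (n h : ℕ) : Finset ((Fin n → Bool) × (Fin n → Bool)) :=
  univ.filter (SP n h)

lemma mem_Scut {n h : ℕ} {v} : v ∈ Scut n h ↔ SP n h v := by
  simp [Scut]

lemma flp_self {n : ℕ} (i : Fin n) (y : Fin n → Bool) : flp i y i = !(y i) := by
  simp [flp]

lemma flp_ne {n : ℕ} {i j : Fin n} (y : Fin n → Bool) (hj : j ≠ i) : flp i y j = y j := by
  simp [flp, hj]

lemma flp_flp {n : ℕ} (i : Fin n) (y : Fin n → Bool) : flp i (flp i y) = y := by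
  funext j
  by_cases hj : j = i
  · subst hj; simp [flp]
  · simp [flp, hj]

lemma flp_inj {n : ℕ} {i j : Fin n} {y : Fin n → Bool} (hij : flp i y = flp j y) : i = j := by
  by_contra hne
  have h1 : flp i y i = !(y i) := flp_self i y
  have h2 : flp j y i = y i := flp_ne y hne
  rw [hij, h2] at h1
  exact (Bool.not_ne_self (y i)).symm h1

lemma qn_adj_iff {n : ℕ} {y z : Fin n → Bool} :
    (Qn n).Adj y z ↔ ∃ i, z = flp i y := by
  constructor
  · intro hadj
    obtain ⟨i, hi⟩ := Finset.card_eq_one.mp hadj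
    refine ⟨i, funext fun j => ?_⟩
    by_cases hj : j = i
    · subst hj
      have : j ∈ Finset.univ.filter fun k => y k ≠ z k := by
        rw [hi]; exact Finset.mem_singleton_self j
      have := (Finset.mem_filter.mp this).2
      simp [flp]
      cases hzy : z j <;> cases hyy : y j <;> simp_all
    · have : j ∉ Finset.univ.filter fun k => y k ≠ z k := by
        rw [hi]; simp [hj]
      simp at this
      rw [flp_ne y hj, this]
  · rintro ⟨i, rfl⟩
    show (Finset.univ.filter fun j => y j ≠ flp i y j).card = 1
    rw [show (Finset.univ.filter fun j => y j ≠ flp i y j) = {i} from ?_]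
    · simp
    · ext j
      by_cases hj : j = i
      · subst hj; simp [flp_self]
      · simp [flp_ne y hj, hj]

lemma adj_flip {n : ℕ} (x y : Fin n → Bool) (i : Fin n) :
    (HCN n).Adj (x, y) (x, flp i y) := by
  refine ⟨?_, Or.inl ⟨rfl, qn_adj_iff.mpr ⟨i, rfl⟩⟩⟩
  intro hcontra
  have : y = flp i y := congrArg Prod.snd hcontra
  have := congrFun this i
  rw [flp_self] at this
  exact (Bool.not_ne_self (y i)) this.symm

lemma zV_ne_oV {n : ℕ} (hn : 0 < n) : zV n ≠ oV n := by
  intro hc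
  have := congrFun hc ⟨0, hn⟩
  simp [zV, oV] at this

lemma hiS_empty_iff {n h : ℕ} {y : Fin n → Bool} :
    hiS n h y = ∅ ↔ ∀ i : Fin n, h ≤ (i : ℕ) → y i = false := by
  simp only [hiS, Finset.eq_empty_iff_forall_notMem, Finset.mem_filter, Finset.mem_univ,
    true_and, not_and]
  constructor
  · intro hp i hi
    have := hp i hi
    simpa using this
  · intro hp i hi
    simp [hp i hi]

/-- The sub-hypercube A. -/
def AP (n h : ℕ) (v : (Fin n → Bool) × (Fin n → Bool)) : Prop :=
  v.1 = zV n ∧ hiS n h v.2 = ∅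

lemma closure {n h : ℕ} (hn : 2 ≤ n) (hh : h ≤ n - 1) {u v : (Fin n → Bool) × (Fin n → Bool)}
    (hu : AP n h u) (hadj : (HCN n).Adj u v) (hv : v ∉ Scut n h) : AP n h v := by
  obtain ⟨hu1, hu2⟩ := hu
  obtain ⟨-, hcase⟩ := hadj
  have hsub := hiS_empty_iff.mp hu2
  rcases hcase with ⟨heq, hq⟩ | ⟨hne, heq⟩ | ⟨heq, heq2⟩ | ⟨hne, heq⟩ | ⟨heq, heq2⟩
  · -- cube edge within cluster
    obtain ⟨i, hi⟩ := qn_adj_iff.mp hq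
    by_cases hih : h ≤ (i : ℕ)
    · -- lands in S₁, contradiction
      exfalso
      apply hv
      rw [mem_Scut]
      left
      refine ⟨heq ▸ hu1, ?_⟩
      rw [hi, show hiS n h (flp i u.2) = {i} from ?_]
      · simp
      · ext j
        simp only [hiS, Finset.mem_filter, Finset.mem_univ, true_and, Finset.mem_singleton]
        constructor
        · rintro ⟨hj1, hj2⟩
          by_contra hji
          rw [flp_ne u.2 hji, hsub j hj1] at hj2
          exact Bool.false_ne_true hj2
        · rintro rfl
          rw [flp_self, hsub j hih]
          exact ⟨hih, rfl⟩
    · -- stays in A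
      refine ⟨heq ▸ hu1, ?_⟩
      rw [hi]
      apply hiS_empty_iff.mpr
      intro j hj
      have hji : j ≠ i := by
        intro hc; subst hc; exact hih hj
      rw [flp_ne u.2 hji]
      exact hsub j hj
  · -- u.1 ≠ u.2, v = (u.2, u.1): v ∈ S₂
    exfalso
    apply hv
    rw [mem_Scut]
    right; left
    rw [heq]
    exact ⟨hu2, fun hc => hne (hu1 ▸ hc ▸ rfl), hu1⟩
  · -- u.1 = u.2 = 0, v = (1,1)
    exfalso
    apply hv
    rw [mem_Scut]
    right; right
    have hb : bcomp n u.1 = oV n := by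
      funext j; rw [hu1]; simp [bcomp, zV, oV]
    rw [heq2, hb]
    exact ⟨rfl, rfl⟩
  · -- v.1 ≠ v.2, u = (v.2, v.1): v ∈ S₂
    exfalso
    apply hv
    rw [mem_Scut]
    right; left
    have h1 : v.2 = zV n := by rw [← hu1, heq]
    have h2 : v.1 = u.2 := by rw [heq]
    refine ⟨h2 ▸ hu2, ?_, h1⟩
    intro hc
    exact hne (hc.trans h1.symm)
  · -- v.1 = v.2, u = (bcomp v.1, bcomp v.1): v = (1,1)
    exfalso
    apply hv
    rw [mem_Scut]
    right; right
    have h1 : v.1 = oV n := by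
      funext j
      have : u.1 j = bcomp n v.1 j := by rw [heq2]
      rw [hu1] at this
      simp [zV, bcomp] at this
      simp [oV, this]
    exact ⟨h1, heq ▸ h1⟩

lemma card_hi_indices {n h : ℕ} (hhn : h < n) :
    (Finset.univ.filter fun i : Fin n => h ≤ (i:ℕ)).card = n - h := by
  rw [show (Finset.univ.filter fun i : Fin n => h ≤ (i:ℕ)) = Finset.Ici ⟨h, hhn⟩ from ?_]
  · simp [Fin.card_Ici]
  · ext j; simp [Fin.le_def]

open scoped Classical in
lemma bad_card {n h : ℕ} (hn : 2 ≤ n) (hh : h ≤ n - 1)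
    {v : (Fin n → Bool) × (Fin n → Bool)} (hv : v ∉ Scut n h) :
    (Finset.univ.filter fun i : Fin n => (v.1, flp i v.2) ∈ Scut n h).card ≤ n - h := by
  by_cases hx : v.1 = zV n
  · -- bad indices are high
    refine le_trans (Finset.card_le_card ?_) (le_of_eq (card_hi_indices (by omega)))
    intro i hi
    simp only [Finset.mem_filter, Finset.mem_univ, true_and] at hi ⊢
    rw [mem_Scut] at hi
    rcases hi with ⟨-, hcard⟩ | ⟨-, hne, -⟩ | ⟨h1, -⟩
    · by_contra hih
      push_neg at hih
      apply hv
      rw [mem_Scut]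
      left
      refine ⟨hx, ?_⟩
      rw [show hiS n h v.2 = hiS n h (flp i v.2) from ?_] at *
      · exact hcard
      · ext j
        simp only [hiS, Finset.mem_filter, Finset.mem_univ, true_and]
        constructor
        · rintro ⟨hj1, hj2⟩
          refine ⟨hj1, ?_⟩
          rwa [flp_ne v.2 (by intro hc; subst hc; omega)]
        · rintro ⟨hj1, hj2⟩
          refine ⟨hj1, ?_⟩
          rwa [flp_ne v.2 (by intro hc; subst hc; omega)] at hj2
    · exact absurd hx hne
    · exact absurd (hx.symm.trans h1) (zV_ne_oV (by omega))
  · -- at most one bad index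
    have h1 : (Finset.univ.filter fun i : Fin n => (v.1, flp i v.2) ∈ Scut n h).card ≤ 1 := by
      apply Finset.card_le_one.mpr
      intro i hi j hj
      simp only [Finset.mem_filter, Finset.mem_univ, true_and, mem_Scut] at hi hj
      have hno : ¬ (v.1 = oV n ∧ hiS n h v.1 = ∅) := by
        rintro ⟨ho, he⟩
        have := hiS_empty_iff.mp he ⟨n-1, by omega⟩ (by simp; omega)
        rw [ho] at this
        simp [oV] at this
      rcases hi with ⟨hi1, -⟩ | ⟨hi1, -, hi3⟩ | ⟨hi1, hi2⟩ <;>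
        rcases hj with ⟨hj1, -⟩ | ⟨hj1, -, hj3⟩ | ⟨hj1, hj2⟩
      · exact absurd hi1 hx
      · exact absurd hi1 hx
      · exact absurd hi1 hx
      · exact absurd hj1 hx
      · exact flp_inj (hi3.trans hj3.symm)
      · exact absurd ⟨hj1, hi1⟩ hno
      · exact absurd hj1 hx
      · exact absurd ⟨hi1, hj1⟩ hno
      · exact flp_inj (hi2.trans hj2.symm)
    omega

def extF (n h : ℕ) (a : Fin h → Bool) : Fin n → Bool :=
  fun j => if hj : (j : ℕ) < h then a ⟨j, hj⟩ else false

lemma extF_high {n h : ℕ} (a : Fin h → Bool) {j : Fin n} (hj : h ≤ (j : ℕ)) :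
    extF n h a j = false := by
  simp [extF, Nat.not_lt.mpr hj]

lemma extF_ne_zV {n h : ℕ} (hh : h ≤ n - 1) (hn : 2 ≤ n) {a : Fin h → Bool}
    (ha : a ≠ fun _ => false) : extF n h a ≠ zV n := by
  intro hc
  apply ha
  funext j
  have hj : (j : ℕ) < n := by omega
  have := congrFun hc ⟨j, hj⟩
  simp only [extF, zV] at this
  rw [dif_pos j.isLt] at this
  simpa using this

lemma extF_inj {n h : ℕ} (hh : h ≤ n - 1) (hn : 2 ≤ n) {a a' : Fin h → Bool}
    (hc : extF n h a = extF n h a') : a = a' := by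
  funext j
  have hj : (j : ℕ) < n := by omega
  have := congrFun hc ⟨j, hj⟩
  simp only [extF] at this
  rw [dif_pos (show ((⟨(j:ℕ), hj⟩ : Fin n) : ℕ) < h from j.isLt),
      dif_pos (show ((⟨(j:ℕ), hj⟩ : Fin n) : ℕ) < h from j.isLt)] at this
  simpa using this

noncomputable def gfun (n h : ℕ) (p : (Fin h → Bool) × Fin (n + 1 - h)) :
    (Fin n → Bool) × (Fin n → Bool) :=
  if hk : (p.2 : ℕ) < n - h then
    (zV n, flp ⟨h + (p.2 : ℕ), by omega⟩ (extF n h p.1))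
  else if p.1 = fun _ => false then (oV n, oV n) else (extF n h p.1, zV n)

lemma hiS_flp_ext {n h : ℕ} (a : Fin h → Bool) (i : Fin n) (hi : h ≤ (i : ℕ)) :
    hiS n h (flp i (extF n h a)) = {i} := by
  ext j
  simp only [hiS, Finset.mem_filter, Finset.mem_univ, true_and, Finset.mem_singleton]
  constructor
  · rintro ⟨hj1, hj2⟩
    by_contra hji
    rw [flp_ne _ hji, extF_high a hj1] at hj2
    exact Bool.false_ne_true hj2
  · rintro rfl
    rw [flp_self, extF_high a hi]
    exact ⟨hi, rfl⟩

lemma hiS_extF {n h : ℕ} (a : Fin h → Bool) : hiS n h (extF n h a) = ∅ :=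
  hiS_empty_iff.mpr fun i hi => extF_high a hi

lemma gfun_mem_Scut {n h : ℕ} (hn : 2 ≤ n) (hh : h ≤ n - 1)
    (p : (Fin h → Bool) × Fin (n + 1 - h)) : gfun n h p ∈ Scut n h := by
  rw [mem_Scut]
  unfold gfun
  by_cases hk : (p.2 : ℕ) < n - h
  · rw [dif_pos hk]
    left
    refine ⟨rfl, ?_⟩
    rw [hiS_flp_ext p.1 _ (by simp)]
    simp
  · rw [dif_neg hk]
    by_cases ha : p.1 = fun _ => false
    · rw [if_pos ha]
      right; right; exact ⟨rfl, rfl⟩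
    · rw [if_neg ha]
      right; left
      exact ⟨hiS_extF p.1, extF_ne_zV hh hn ha, rfl⟩

lemma gfun_inj {n h : ℕ} (hn : 2 ≤ n) (hh : h ≤ n - 1) :
    Function.Injective (gfun n h) := by
  intro p q hpq
  unfold gfun at hpq
  by_cases hkp : (p.2 : ℕ) < n - h <;> by_cases hkq : (q.2 : ℕ) < n - h
  · rw [dif_pos hkp, dif_pos hkq] at hpq
    have h2 := congrArg Prod.snd hpq
    simp only at h2
    set i : Fin n := ⟨h + (p.2 : ℕ), by omega⟩
    set i' : Fin n := ⟨h + (q.2 : ℕ), by omega⟩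
    have hii : i = i' := by
      by_contra hne
      have := congrFun h2 i
      rw [flp_self, extF_high p.1 (by simp [i]), flp_ne _ (Ne.symm ?_), extF_high q.1 (by simp [i])] at this
      · exact Bool.false_ne_true this.symm
      · exact fun hc => hne hc.symm
    have hk : p.2 = q.2 := by
      have := congrArg Fin.val hii
      simp only [i, i'] at this
      exact Fin.ext (by omega)
    rw [hii] at h2
    have hext : extF n h p.1 = extF n h q.1 := by
      have := congrArg (flp i') h2
      rwa [flp_flp, flp_flp] at this
    exact Prod.ext (extF_inj hh hn hext) hk
  · exfalso
    rw [dif_pos hkp, dif_neg hkq] at hpq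
    have h1 := congrArg Prod.fst hpq
    by_cases ha : q.1 = fun _ => false
    · rw [if_pos ha] at h1
      exact zV_ne_oV (by omega) h1
    · rw [if_neg ha] at h1
      exact extF_ne_zV hh hn ha h1.symm
  · exfalso
    rw [dif_neg hkp, dif_pos hkq] at hpq
    have h1 := congrArg Prod.fst hpq
    by_cases ha : p.1 = fun _ => false
    · rw [if_pos ha] at h1
      exact zV_ne_oV (by omega) h1.symm
    · rw [if_neg ha] at h1
      exact extF_ne_zV hh hn ha h1
  · rw [dif_neg hkp, dif_neg hkq] at hpq
    have hk : p.2 = q.2 := by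
      have h1 : (p.2 : ℕ) = n - h := by have := p.2.isLt; omega
      have h2 : (q.2 : ℕ) = n - h := by have := q.2.isLt; omega
      exact Fin.ext (h1.trans h2.symm)
    by_cases ha : p.1 = fun _ => false <;> by_cases hb : q.1 = fun _ => false
    · exact Prod.ext (ha.trans hb.symm) hk
    · exfalso
      rw [if_pos ha, if_neg hb] at hpq
      have := congrArg Prod.snd hpq
      exact zV_ne_oV (by omega) (this.symm)
    · exfalso
      rw [if_neg ha, if_pos hb] at hpq
      have := congrArg Prod.snd hpq
      exact zV_ne_oV (by omega) this
    · rw [if_neg ha, if_neg hb] at hpq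
      have h1 := congrArg Prod.fst hpq
      exact Prod.ext (extF_inj hh hn h1) hk

open scoped Classical in
lemma Scut_subset_image {n h : ℕ} (hn : 2 ≤ n) (hh : h ≤ n - 1) {v}
    (hv : v ∈ Scut n h) : ∃ p, gfun n h p = v := by
  rw [mem_Scut] at hv
  have hhn : h < n := by omega
  rcases hv with ⟨h1, h2⟩ | ⟨h1, h2, h3⟩ | ⟨h1, h2⟩
  · obtain ⟨i, hi⟩ := Finset.card_eq_one.mp h2
    have himem : i ∈ hiS n h v.2 := hi ▸ Finset.mem_singleton_self i
    simp only [hiS, Finset.mem_filter] at himem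
    obtain ⟨-, hih, hit⟩ := himem
    refine ⟨(fun j => v.2 ⟨(j : ℕ), by omega⟩, ⟨(i : ℕ) - h, by omega⟩), ?_⟩
    unfold gfun
    rw [dif_pos (show (i : ℕ) - h < n - h by have := i.isLt; omega)]
    have hidx : (⟨h + ((i:ℕ) - h), by omega⟩ : Fin n) = i := Fin.ext (by simp; omega)
    rw [hidx]
    refine Prod.ext h1.symm ?_
    dsimp only
    funext j
    by_cases hji : j = i
    · subst hji
      rw [flp_self, extF_high _ hih, hit]
      rfl
    · rw [flp_ne _ hji]
      by_cases hjh : (j : ℕ) < h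
      · simp only [extF]
        rw [dif_pos hjh]
      · have : j ∉ hiS n h v.2 := by rw [hi]; simpa using hji
        simp only [hiS, Finset.mem_filter, Finset.mem_univ, true_and, not_and] at this
        have hjf : v.2 j = false := by
          have := this (by omega)
          simpa using this
        rw [extF_high _ (by omega), hjf]
  · refine ⟨(fun j => v.1 ⟨(j : ℕ), by omega⟩, ⟨n - h, by omega⟩), ?_⟩
    unfold gfun
    rw [dif_neg (by simp)]
    have hrext : extF n h (fun j : Fin h => v.1 ⟨(j : ℕ), by omega⟩) = v.1 := by
      funext j
      by_cases hjh : (j : ℕ) < h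
      · simp only [extF]
        rw [dif_pos hjh]
      · rw [extF_high _ (by omega)]
        exact (hiS_empty_iff.mp h1 j (by omega)).symm
    rw [if_neg ?_]
    · rw [hrext]; exact Prod.ext rfl h3.symm
    · intro hc
      dsimp only at hc
      apply h2
      rw [← hrext, hc]
      funext j
      simp [extF, zV]
  · refine ⟨(fun _ => false, ⟨n - h, by omega⟩), ?_⟩
    unfold gfun
    rw [dif_neg (by simp), if_pos rfl]
    exact Prod.ext h1.symm h2.symm

set_option synthInstance.maxHeartbeats 1000000 in
open scoped Classical in
lemma Scut_card {n h : ℕ} (hn : 2 ≤ n) (hh : h ≤ n - 1) :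
    (Scut n h).card = 2 ^ h * (n + 1 - h) := by
  have himg : Scut n h = Finset.image (gfun n h) Finset.univ := by
    ext v
    constructor
    · intro hv
      obtain ⟨p, hp⟩ := Scut_subset_image hn hh hv
      exact Finset.mem_image.mpr ⟨p, Finset.mem_univ p, hp⟩
    · intro hv
      obtain ⟨p, -, hp⟩ := Finset.mem_image.mp hv
      exact hp ▸ gfun_mem_Scut hn hh p
  rw [himg, Finset.card_image_of_injective _ (gfun_inj hn hh), Finset.card_univ,
    Fintype.card_prod, Fintype.card_fun, Fintype.card_fin, Fintype.card_bool, Fintype.card_fin]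

lemma zz_not_mem {n h : ℕ} (hn : 2 ≤ n) : (zV n, zV n) ∉ Scut n h := by
  rw [mem_Scut]
  rintro (⟨-, hc⟩ | ⟨-, hne, -⟩ | ⟨hc, -⟩)
  · rw [show hiS n h (zV n) = ∅ from hiS_empty_iff.mpr fun _ _ => rfl] at hc
    simp at hc
  · exact hne rfl
  · exact zV_ne_oV (by omega) hc

/-- the witness vertex outside the component of A -/
def wW (n : ℕ) (hn : 2 ≤ n) : Fin n → Bool := flp ⟨n - 1, by omega⟩ (zV n)

lemma wW_ne_zV {n : ℕ} (hn : 2 ≤ n) : wW n hn ≠ zV n := by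
  intro hc
  have := congrFun hc ⟨n - 1, by omega⟩
  rw [wW, flp_self] at this
  simp [zV] at this

lemma ww_not_mem {n h : ℕ} (hn : 2 ≤ n) (hh : h ≤ n - 1) :
    (wW n hn, wW n hn) ∉ Scut n h := by
  rw [mem_Scut]
  rintro (⟨hc, -⟩ | ⟨hc, -, -⟩ | ⟨hc, -⟩)
  · exact wW_ne_zV hn hc
  · have := hiS_empty_iff.mp hc ⟨n - 1, by omega⟩ (by simpa using hh)
    dsimp only at this
    rw [wW, flp_self] at this
    simp [zV] at this
  · have hne01 : (⟨0, by omega⟩ : Fin n) ≠ ⟨n - 1, by omega⟩ := by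
      intro hcc
      have := congrArg Fin.val hcc
      simp at this
      omega
    have := congrFun hc ⟨0, by omega⟩
    dsimp only at this
    rw [wW, flp_ne _ hne01] at this
    simp [zV, oV] at this

lemma walk_closed {n h : ℕ} (hn : 2 ≤ n) (hh : h ≤ n - 1)
    {u v : {v : (Fin n → Bool) × (Fin n → Bool) | v ∉ Scut n h}}
    (p : ((HCN n).induce {v | v ∉ Scut n h}).Walk u v) (hu : AP n h u.1) : AP n h v.1 := by
  induction p with
  | nil => exact hu
  | @cons a b c hadj q ih =>
    exact ih (closure hn hh hu hadj b.2)

end S15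

open scoped Classical in
/-- HCN_n (n ≥ 2, 0 ≤ h ≤ n-1) has an h-vertex-cut of size 2^h (n+1-h): removing it
disconnects the graph while every remaining vertex keeps at least h neighbors.
Hence κ^h(HCN_n) ≤ 2^h (n+1-h). -/
theorem stmt15 (n h : ℕ) (hn : 2 ≤ n) (hh : h ≤ n - 1) :
    ∃ S : Finset ((Fin n → Bool) × (Fin n → Bool)),
      S.card = 2 ^ h * (n + 1 - h) ∧
      ({v | v ∉ S} : Set ((Fin n → Bool) × (Fin n → Bool))).Nonempty ∧
      ¬ ((HCN n).induce {v | v ∉ S}).Connected ∧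
      ∀ v ∉ S, h ≤ (Finset.univ.filter
        (fun w => w ∉ S ∧ (HCN n).Adj v w)).card := by
  classical
  refine ⟨S15.Scut n h, S15.Scut_card hn hh, ⟨(S15.zV n, S15.zV n), S15.zz_not_mem hn⟩, ?_, ?_⟩
  · -- disconnected
    intro hcon
    have hreach := hcon.preconnected
      ⟨(S15.zV n, S15.zV n), S15.zz_not_mem hn⟩
      ⟨(S15.wW n hn, S15.wW n hn), S15.ww_not_mem hn hh⟩
    obtain ⟨p⟩ := hreach
    have hA : S15.AP n h (S15.wW n hn, S15.wW n hn) :=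
      S15.walk_closed hn hh p ⟨rfl, S15.hiS_empty_iff.mpr fun _ _ => rfl⟩
    exact S15.wW_ne_zV hn hA.1
  · -- minimum degree h in the remainder
    intro v hv
    have hB := S15.bad_card hn hh hv
    have hGB := Finset.card_filter_add_card_filter_not
      (s := (Finset.univ : Finset (Fin n)))
      (p := fun i => (v.1, S15.flp i v.2) ∈ S15.Scut n h)
    rw [Finset.card_univ, Fintype.card_fin] at hGB
    have hGood : h ≤ (Finset.univ.filter
        fun i : Fin n => ¬ (v.1, S15.flp i v.2) ∈ S15.Scut n h).card := by omega
    refine le_trans hGood (Finset.card_le_card_of_injOn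
      (fun i => (v.1, S15.flp i v.2)) ?_ ?_)
    · intro i hi
      simp only [Finset.coe_filter, Finset.mem_coe, Finset.mem_filter, Finset.mem_univ, true_and, Set.mem_setOf_eq] at hi ⊢
      refine ⟨hi, ?_⟩
      have := S15.adj_flip v.1 v.2 i
      rwa [Prod.mk.eta] at this
    · intro i hi j hj hij
      exact S15.flp_inj (congrArg Prod.snd hij)
end

section
/- The connectivity and edge-connectivity of HCN_n both equal n+1 for n ≥ 1: at least n+1 vertices (or edges) must be removed to disconnect HCN_n, and removing the n+1 neighbors (or incident edges) of a single vertex disconnects it. -/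
namespace S19
open SimpleGraph Finset Classical
attribute [local instance] Classical.propDecidable

abbrev V (n : ℕ) := Fin n → Bool

/-- non-dependent snoc -/
def snc {n : ℕ} (z : V n) (b : Bool) : V (n+1) := Fin.snoc z b

@[simp] lemma snc_castSucc {n : ℕ} (z : V n) (b : Bool) (j : Fin n) :
    snc z b j.castSucc = z j := by simp [snc]

@[simp] lemma snc_last {n : ℕ} (z : V n) (b : Bool) :
    snc z b (Fin.last n) = b := by simp [snc]

lemma snc_inj {n : ℕ} {b : Bool} : Function.Injective (fun z : V n => snc z b) := by
  intro a a' h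
  have := congrArg Fin.init h
  simpa [snc, Fin.init_snoc] using this

lemma snc_init_self {n : ℕ} (x : V (n+1)) : snc (Fin.init x) (x (Fin.last n)) = x := by
  simp [snc, Fin.snoc_init_self]

lemma qn_adj_iff {n : ℕ} {x y : V n} :
    (Qn n).Adj x y ↔ ∃ i, y = Function.update x i (!(x i)) := by
  constructor
  · intro h
    obtain ⟨i, hi⟩ := Finset.card_eq_one.1 h
    refine ⟨i, funext fun j => ?_⟩
    by_cases hj : j = i
    · subst hj
      have : j ∈ Finset.univ.filter fun i => x i ≠ y i := by rw [hi]; simp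
      have := (Finset.mem_filter.1 this).2
      cases hx : x j <;> cases hy : y j <;> simp_all [Function.update_self]
    · have : j ∉ Finset.univ.filter fun i => x i ≠ y i := by rw [hi]; simp [hj]
      simp only [Finset.mem_filter, Finset.mem_univ, true_and, not_not] at this
      simp [Function.update_of_ne hj, this.symm]
  · rintro ⟨i, rfl⟩
    show Finset.card _ = 1
    have : (Finset.univ.filter fun j => x j ≠ Function.update x i (!(x i)) j) = {i} := by
      ext j
      by_cases hj : j = i
      · subst hj; simp [Function.update_self]
      · simp [Function.update_of_ne hj, hj]
    rw [this, Finset.card_singleton]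

lemma qn_adj_flip {n : ℕ} (x : V n) (i : Fin n) :
    (Qn n).Adj x (Function.update x i (!(x i))) := qn_adj_iff.2 ⟨i, rfl⟩

lemma qn_adj_snoc {n : ℕ} {z z' : V n} (b : Bool) :
    (Qn (n+1)).Adj (snc z b) (snc z' b) ↔ (Qn n).Adj z z' := by
  show (Finset.univ.filter fun i => snc z b i ≠ snc z' b i).card = 1 ↔
    (Finset.univ.filter fun i => z i ≠ z' i).card = 1
  have : (Finset.univ.filter fun i => snc z b i ≠ snc z' b i) =
      (Finset.univ.filter fun i => z i ≠ z' i).map Fin.castSuccEmb := by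
    ext i
    refine Fin.lastCases ?_ (fun j => ?_) i
    · simp only [Finset.mem_filter, Finset.mem_univ, true_and, snc_last, Finset.mem_map]
      constructor
      · intro h; exact absurd rfl h
      · rintro ⟨k, hk, hkj⟩
        exact absurd (congrArg Fin.val hkj) (by simp [Fin.castSuccEmb]; omega)
    · simp only [Finset.mem_filter, Finset.mem_univ, true_and, snc_castSucc, Finset.mem_map]
      constructor
      · intro h; exact ⟨j, by simp [h], rfl⟩
      · rintro ⟨k, hk, hkj⟩
        have : k = j := Fin.castSucc_injective _ hkj
        subst this
        simpa using hk
  rw [this, Finset.card_map]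

lemma qn_adj_snoc_flip {n : ℕ} (z : V n) (b b' : Bool) (hb : b ≠ b') :
    (Qn (n+1)).Adj (snc z b) (snc z b') := by
  show (Finset.univ.filter fun i => snc z b i ≠ snc z b' i).card = 1
  have : (Finset.univ.filter fun i => snc z b i ≠ snc z b' i) = {Fin.last n} := by
    ext i
    refine Fin.lastCases ?_ (fun j => ?_) i
    · simp [hb]
    · simp only [Finset.mem_filter, Finset.mem_univ, true_and, snc_castSucc,
        Finset.mem_singleton]
      constructor
      · intro h; exact absurd rfl h
      · intro h
        exact absurd (congrArg Fin.val h) (by simp; omega)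
  rw [this, Finset.card_singleton]


lemma exists_not_mem {α} [Fintype α] (s : Finset α) (h : s.card < Fintype.card α) :
    ∃ a, a ∉ s := by
  by_contra hc
  push_neg at hc
  have : (Finset.univ : Finset α) ⊆ s := fun a _ => hc a
  have := Finset.card_le_card this
  simp [Finset.card_univ] at this
  omega

lemma card_V (n : ℕ) : Fintype.card (V n) = 2^n := by simp [Fintype.card_fun]

lemma two_le_pow {n : ℕ} (hn : 2 ≤ n) : n + 2 ≤ 2^n := by
  calc n + 2 ≤ 2*n := by omega
  _ ≤ 2 * 2^(n-1) := by have := Nat.lt_two_pow_self (n := n-1); omega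
  _ = 2^n := by
      rw [← pow_succ']
      congr 1
      omega

/-- vertex-fault tolerance of the hypercube -/
lemma qn_fault : ∀ (n : ℕ) (S : Finset (V n)), (S.card < n ∨ S = ∅) →
    ∀ u v, u ∉ S → v ∉ S →
    ∃ w : (Qn n).Walk u v, ∀ z ∈ w.support, z ∉ S := by
  intro n
  induction n with
  | zero =>
    intro S hS u v hu hv
    have huv : u = v := funext fun i => i.elim0
    subst huv
    exact ⟨SimpleGraph.Walk.nil, by intro z hz; simp at hz; subst hz; exact hu⟩
  | succ n ih =>
    intro S hS u v hu hv
    -- halves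
    set Sb : Bool → Finset (V n) := fun b => Finset.univ.filter (fun z => snc z b ∈ S) with hSbdef
    have hmem : ∀ b z, z ∈ Sb b ↔ snc z b ∈ S := by intro b z; simp [hSbdef]
    -- total card
    have hcards : (Sb false).card + (Sb true).card = S.card := by
      have himg : ∀ b : Bool, (Sb b).image (fun z => snc z b) = S.filter (fun x => x (Fin.last n) = b) := by
        intro b
        ext x
        simp only [Finset.mem_image, Finset.mem_filter, hmem]
        constructor
        · rintro ⟨a, ha, rfl⟩
          exact ⟨ha, by simp⟩
        · rintro ⟨hx, hb⟩
          exact ⟨Fin.init x, by rw [← hb, snc_init_self]; exact hx, by rw [← hb]; exact snc_init_self x⟩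
      have hc : ∀ b : Bool, (Sb b).card = (S.filter (fun x => x (Fin.last n) = b)).card := by
        intro b
        rw [← himg b, Finset.card_image_of_injective _ snc_inj]
      rw [hc false, hc true]
      have := Finset.card_filter_add_card_filter_not (s := S)
        (p := fun x => x (Fin.last n) = false)
      simp only [Bool.not_eq_false] at this
      convert this using 2
    have hSle : (Sb false).card + (Sb true).card ≤ n := by
      rcases hS with h | h
      · omega
      · have h0 : S.card = 0 := by rw [h]; simp
        omega
    -- walk inside a half
    have inside : ∀ (b : Bool), ((Sb b).card < n ∨ Sb b = ∅) → ∀ z z', z ∉ Sb b → z' ∉ Sb b →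
        ∃ w : (Qn (n+1)).Walk (snc z b) (snc z' b), ∀ x ∈ w.support, x ∉ S := by
      intro b hb z z' hz hz'
      obtain ⟨w, hw⟩ := ih (Sb b) hb z z' hz hz'
      refine ⟨w.map ⟨fun a => snc a b, fun h => (qn_adj_snoc b).2 h⟩, ?_⟩
      intro x hx
      rw [SimpleGraph.Walk.support_map, List.mem_map] at hx
      obtain ⟨a, ha, rfl⟩ := hx
      exact fun hc => hw a ha ((hmem b a).2 hc)
    obtain ⟨zu, bu, rfl⟩ : ∃ z b, u = snc z b := ⟨_, _, (snc_init_self u).symm⟩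
    obtain ⟨zv, bv, rfl⟩ : ∃ z b, v = snc z b := ⟨_, _, (snc_init_self v).symm⟩
    have hzu : zu ∉ Sb bu := fun hc => hu ((hmem _ _).1 hc)
    have hzv : zv ∉ Sb bv := fun hc => hv ((hmem _ _).1 hc)
    by_cases hgood : ∀ b : Bool, (Sb b).card < n ∨ Sb b = ∅
    · -- both halves usable
      by_cases hbb : bu = bv
      · subst hbb
        exact inside bu (hgood bu) zu zv hzu hzv
      · -- find crossing vertex
        have : ((Sb false) ∪ (Sb true)).card < Fintype.card (V n) := by
          have := Finset.card_union_le (Sb false) (Sb true)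
          rw [card_V]
          have := Nat.lt_two_pow_self (n := n)
          omega
        obtain ⟨z, hz⟩ := exists_not_mem _ this
        have hz0 : ∀ b, z ∉ Sb b := by
          intro b
          cases b <;> simp only [Finset.mem_union, not_or] at hz
          · exact hz.1
          · exact hz.2
        obtain ⟨w1, hw1⟩ := inside bu (hgood bu) zu z hzu (hz0 bu)
        obtain ⟨w2, hw2⟩ := inside bv (hgood bv) z zv (hz0 bv) hzv
        refine ⟨w1.append ((SimpleGraph.Walk.cons (qn_adj_snoc_flip z bu bv hbb) SimpleGraph.Walk.nil).append w2), ?_⟩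
        intro x hx
        rw [SimpleGraph.Walk.mem_support_append_iff] at hx
        rcases hx with hx | hx
        · exact hw1 x hx
        · rw [SimpleGraph.Walk.mem_support_append_iff] at hx
          rcases hx with hx | hx
          · simp only [SimpleGraph.Walk.support_cons, SimpleGraph.Walk.support_nil] at hx
            rcases List.mem_cons.1 hx with rfl | hx
            · exact fun hc => (hz0 bu) ((hmem _ _).2 hc)
            · simp at hx
              subst hx
              exact fun hc => (hz0 bv) ((hmem _ _).2 hc)
          · exact hw2 x hx
    · -- one bad half
      push_neg at hgood
      obtain ⟨b, hb1, hb2⟩ := hgood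
      have hbcard : (Sb b).card = n := by
        have : 1 ≤ (Sb b).card := Finset.card_pos.2 hb2
        have hle : (Sb b).card ≤ n := by cases b <;> omega
        omega
      have hother : Sb (!b) = ∅ := by
        rw [← Finset.card_eq_zero]
        cases b
        · simp only [Bool.not_false]; omega
        · simp only [Bool.not_true]; omega
      -- move into clean half
      have escape : ∀ (z : V n) (c : Bool), snc z c ∉ S →
          ∃ w : (Qn (n+1)).Walk (snc z c) (snc z (!b)), ∀ x ∈ w.support, x ∉ S := by
        intro z c hzc
        by_cases hc : c = !b
        · subst hc
          exact ⟨SimpleGraph.Walk.nil, by intro x hx; simp at hx; subst hx; exact hzc⟩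
        · have hcb : c = b := by cases b <;> cases c <;> simp_all
          subst hcb
          have hnotin : snc z (!c) ∉ S := by
            intro hcon
            have : z ∈ Sb (!c) := (hmem _ _).2 hcon
            rw [hother] at this
            simp at this
          refine ⟨SimpleGraph.Walk.cons (qn_adj_snoc_flip z c (!c) (by cases c <;> simp)) SimpleGraph.Walk.nil, ?_⟩
          intro x hx
          simp only [SimpleGraph.Walk.support_cons, SimpleGraph.Walk.support_nil] at hx
          rcases List.mem_cons.1 hx with rfl | hx
          · exact hzc
          · simp at hx; subst hx; exact hnotin
      obtain ⟨w1, hw1⟩ := escape zu bu hu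
      obtain ⟨w3, hw3⟩ := escape zv bv hv
      have hclean : ∀ z : V n, z ∉ Sb (!b) := by intro z; rw [hother]; simp
      obtain ⟨w2, hw2⟩ := inside (!b) (Or.inr hother) zu zv (hclean zu) (hclean zv)
      refine ⟨w1.append (w2.append w3.reverse), ?_⟩
      intro x hx
      rw [SimpleGraph.Walk.mem_support_append_iff] at hx
      rcases hx with hx | hx
      · exact hw1 x hx
      · rw [SimpleGraph.Walk.mem_support_append_iff] at hx
        rcases hx with hx | hx
        · exact hw2 x hx
        · rw [SimpleGraph.Walk.support_reverse, List.mem_reverse] at hx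
          exact hw3 x hx

/-- edge-fault tolerance of the hypercube -/
lemma qn_fault_edge : ∀ (n : ℕ) (F : Finset (Sym2 (V n))), (F.card < n ∨ F = ∅) →
    ∀ u v, ∃ w : (Qn n).Walk u v, ∀ e ∈ w.edges, e ∉ F := by
  intro n
  induction n with
  | zero =>
    intro F hF u v
    have huv : u = v := funext fun i => i.elim0
    subst huv
    exact ⟨SimpleGraph.Walk.nil, by intro e he; simp at he⟩
  | succ n ih =>
    intro F hF u v
    set Fb : Bool → Finset (Sym2 (V n)) :=
      fun b => Finset.univ.filter (fun e' => e'.map (fun z => snc z b) ∈ F) with hFbdef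
    have hFbmem : ∀ b e', e' ∈ Fb b ↔ e'.map (fun z => snc z b) ∈ F := by
      intro b e'; simp [hFbdef]
    have hFbcard : ∀ b, (Fb b).card ≤ F.card := by
      intro b
      refine Finset.card_le_card_of_injOn (fun e' => e'.map (fun z => snc z b)) ?_ ?_
      · intro e' he'; exact (hFbmem b e').1 he'
      · intro e1 _ e2 _ h
        exact Sym2.map.injective snc_inj h
    -- inside walk
    have inside : ∀ (b : Bool), ((Fb b).card < n ∨ Fb b = ∅) → ∀ z z',
        ∃ w : (Qn (n+1)).Walk (snc z b) (snc z' b), ∀ e ∈ w.edges, e ∉ F := by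
      intro b hb z z'
      obtain ⟨w, hw⟩ := ih (Fb b) hb z z'
      refine ⟨w.map ⟨fun a => snc a b, fun h => (qn_adj_snoc b).2 h⟩, ?_⟩
      intro e he
      rw [SimpleGraph.Walk.edges_map, List.mem_map] at he
      obtain ⟨e', he', rfl⟩ := he
      intro hc
      exact hw e' he' ((hFbmem b e').2 hc)
    obtain ⟨zu, bu, rfl⟩ : ∃ z b, u = snc z b := ⟨_, _, (snc_init_self u).symm⟩
    obtain ⟨zv, bv, rfl⟩ : ∃ z b, v = snc z b := ⟨_, _, (snc_init_self v).symm⟩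
    by_cases hgood : ∀ b : Bool, (Fb b).card < n ∨ Fb b = ∅
    · -- both halves usable
      by_cases hbb : bu = bv
      · subst hbb
        exact inside bu (hgood bu) zu zv
      · -- crossing edges in F
        set Fc : Finset (V n) :=
          Finset.univ.filter (fun z => s(snc z false, snc z true) ∈ F) with hFcdef
        have hFccard : Fc.card ≤ F.card := by
          refine Finset.card_le_card_of_injOn (fun z => s(snc z false, snc z true)) ?_ ?_
          · intro z hz; exact (Finset.mem_filter.1 hz).2
          · intro z1 _ z2 _ h
            rcases Sym2.eq_iff.1 h with ⟨h1, _⟩ | ⟨h1, _⟩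
            · exact snc_inj h1
            · exact absurd (congrFun h1 (Fin.last n)) (by simp)
        have hFcub : Fc.card < Fintype.card (V n) := by
          rw [card_V]
          have := Nat.lt_two_pow_self (n := n)
          rcases hF with h | h
          · omega
          · have : F.card = 0 := by rw [h]; simp
            omega
        obtain ⟨z, hz⟩ := exists_not_mem _ hFcub
        have hzF : s(snc z bu, snc z bv) ∉ F := by
          have hbv : bv = !bu := by cases bu <;> cases bv <;> simp_all
          subst hbv
          intro hc
          apply hz
          rw [hFcdef]
          refine Finset.mem_filter.2 ⟨Finset.mem_univ _, ?_⟩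
          cases bu
          · simpa using hc
          · simp only [Bool.not_true] at hc
            rwa [Sym2.eq_swap] at hc
        obtain ⟨w1, hw1⟩ := inside bu (hgood bu) zu z
        obtain ⟨w2, hw2⟩ := inside bv (hgood bv) z zv
        refine ⟨w1.append ((SimpleGraph.Walk.cons (qn_adj_snoc_flip z bu bv hbb) SimpleGraph.Walk.nil).append w2), ?_⟩
        intro e he
        rw [SimpleGraph.Walk.edges_append, List.mem_append] at he
        rcases he with he | he
        · exact hw1 e he
        · rw [SimpleGraph.Walk.edges_append, List.mem_append] at he
          rcases he with he | he
          · simp only [SimpleGraph.Walk.edges_cons, SimpleGraph.Walk.edges_nil] at he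
            rcases List.mem_cons.1 he with rfl | he
            · exact hzF
            · simp at he
          · exact hw2 e he
    · -- one bad half: all of F inside half b
      push_neg at hgood
      obtain ⟨b, hb1, hb2⟩ := hgood
      have hb1' : n ≤ (Fb b).card := hb1
      have hFle : F.card ≤ n := by
        rcases hF with h | h
        · omega
        · rw [h]; simp
      have h2 := hFbcard b
      have hbcard : (Fb b).card = n := by omega
      have hFcardn : F.card = n := by omega
      have himg : (Fb b).image (fun e' => e'.map (fun z => snc z b)) = F := by
        apply Finset.eq_of_subset_of_card_le
        · intro e he
          obtain ⟨e', he', rfl⟩ := Finset.mem_image.1 he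
          exact (hFbmem b e').1 he'
        · rw [Finset.card_image_of_injective _ (Sym2.map.injective snc_inj), hbcard, hFcardn]
      -- any member of F is an inside-b edge
      have hshape : ∀ e ∈ F, ∃ e' : Sym2 (V n), e = e'.map (fun z => snc z b) := by
        intro e he
        rw [← himg] at he
        obtain ⟨e', _, rfl⟩ := Finset.mem_image.1 he
        exact ⟨e', rfl⟩
      have hcrossF : ∀ (z : V n) (c c' : Bool), c ≠ c' → s(snc z c, snc z c') ∉ F := by
        intro z c c' hcc hc
        obtain ⟨e', he'⟩ := hshape _ hc
        obtain ⟨p, q⟩ := e'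
        rw [Sym2.map_pair_eq] at he'
        rcases Sym2.eq_iff.1 he' with ⟨h1, h2⟩ | ⟨h1, h2⟩
        · have hcb : c = b := by simpa using congrFun h1 (Fin.last n)
          have hcb' : c' = b := by simpa using congrFun h2 (Fin.last n)
          exact hcc (hcb.trans hcb'.symm)
        · have hcb : c = b := by simpa using congrFun h1 (Fin.last n)
          have hcb' : c' = b := by simpa using congrFun h2 (Fin.last n)
          exact hcc (hcb.trans hcb'.symm)
      have hotherF : Fb (!b) = ∅ := by
        rw [Finset.eq_empty_iff_forall_notMem]
        intro e' he'
        have := (hFbmem _ e').1 he'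
        obtain ⟨e'', he''⟩ := hshape _ this
        obtain ⟨p, q⟩ := e'
        obtain ⟨r, t⟩ := e''
        rw [Sym2.map_pair_eq, Sym2.map_pair_eq] at he''
        rcases Sym2.eq_iff.1 he'' with ⟨h1, _⟩ | ⟨h1, _⟩ <;>
        · have hlast := congrFun h1 (Fin.last n)
          simp at hlast
      -- escape into the clean half
      have escape : ∀ (z : V n) (c : Bool),
          ∃ w : (Qn (n+1)).Walk (snc z c) (snc z (!b)), ∀ e ∈ w.edges, e ∉ F := by
        intro z c
        by_cases hc : c = !b
        · subst hc
          exact ⟨SimpleGraph.Walk.nil, by intro e he; simp at he⟩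
        · have hcb : c = b := by cases b <;> cases c <;> simp_all
          subst hcb
          refine ⟨SimpleGraph.Walk.cons (qn_adj_snoc_flip z c (!c) (by cases c <;> simp)) SimpleGraph.Walk.nil, ?_⟩
          intro e he
          simp only [SimpleGraph.Walk.edges_cons, SimpleGraph.Walk.edges_nil] at he
          rcases List.mem_cons.1 he with rfl | he
          · exact hcrossF z c (!c) (by cases c <;> simp)
          · simp at he
      obtain ⟨w1, hw1⟩ := escape zu bu
      obtain ⟨w3, hw3⟩ := escape zv bv
      obtain ⟨w2, hw2⟩ := inside (!b) (Or.inr hotherF) zu zv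
      refine ⟨w1.append (w2.append w3.reverse), ?_⟩
      intro e he
      rw [SimpleGraph.Walk.edges_append, List.mem_append] at he
      rcases he with he | he
      · exact hw1 e he
      · rw [SimpleGraph.Walk.edges_append, List.mem_append] at he
        rcases he with he | he
        · exact hw2 e he
        · rw [SimpleGraph.Walk.edges_reverse, List.mem_reverse] at he
          exact hw3 e he

lemma bcomp_ne {n : ℕ} (hn : 1 ≤ n) (x : V n) : bcomp n x ≠ x := by
  intro h
  have := congrFun h ⟨0, hn⟩
  simp [bcomp] at this

lemma hcn_adj_inner {n : ℕ} (x : V n) {z z' : V n} (h : (Qn n).Adj z z') :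
    (HCN n).Adj (x, z) (x, z') :=
  ⟨fun hc => h.ne (congrArg Prod.snd hc), Or.inl ⟨rfl, h⟩⟩

lemma hcn_adj_cross {n : ℕ} {x y : V n} (h : x ≠ y) : (HCN n).Adj (x, y) (y, x) :=
  ⟨fun hc => h (congrArg Prod.fst hc), Or.inr (Or.inl ⟨h, rfl⟩)⟩

lemma hcn_adj_comp {n : ℕ} (hn : 1 ≤ n) (x : V n) :
    (HCN n).Adj (x, x) (bcomp n x, bcomp n x) :=
  ⟨fun hc => bcomp_ne hn x (congrArg Prod.fst hc).symm, Or.inr (Or.inr (Or.inl ⟨rfl, rfl⟩))⟩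

/-- main vertex-fault lemma for HCN -/
lemma hcn_fault {n : ℕ} (hn : 1 ≤ n) (S : Finset (V n × V n)) (hS : S.card ≤ n)
    {u v : V n × V n} (hu : u ∉ S) (hv : v ∉ S) :
    ∃ w : (HCN n).Walk u v, ∀ z ∈ w.support, z ∉ S := by
  set Sx : V n → Finset (V n) := fun x => Finset.univ.filter (fun z => (x, z) ∈ S) with hSxdef
  have hSxmem : ∀ x z, z ∈ Sx x ↔ (x, z) ∈ S := fun x z => by simp [hSxdef]
  set dirty : Finset (V n) := S.image Prod.fst with hddef
  have hdirty : ∀ x, x ∉ dirty → ∀ z, (x, z) ∉ S := by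
    intro x hx z hz
    exact hx (Finset.mem_image.2 ⟨(x, z), hz, rfl⟩)
  have hprodinj : ∀ x : V n, Function.Injective (fun z : V n => ((x, z) : V n × V n)) :=
    fun x a b h => congrArg Prod.snd h
  have hSxcard : ∀ x, (Sx x).card ≤ S.card := fun x =>
    Finset.card_le_card_of_injOn (fun z => (x, z)) (fun z hz => (hSxmem x z).1 hz)
      (fun a _ b _ h => congrArg Prod.snd h)
  have inside : ∀ x, (Sx x).card < n → ∀ z z', z ∉ Sx x → z' ∉ Sx x →
      ∃ w : (HCN n).Walk (x, z) (x, z'), ∀ p ∈ w.support, p ∉ S := by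
    intro x hx z z' hz hz'
    obtain ⟨w, hw⟩ := qn_fault n (Sx x) (Or.inl hx) z z' hz hz'
    refine ⟨w.map ⟨fun a => (x, a), fun h => hcn_adj_inner x h⟩, ?_⟩
    intro p hp
    rw [SimpleGraph.Walk.support_map, List.mem_map] at hp
    obtain ⟨a, ha, rfl⟩ := hp
    exact fun hc => hw a ha ((hSxmem x a).2 hc)
  have escape : ∀ p : V n × V n, p ∉ S → ∃ (a1 a2 : V n) (w : (HCN n).Walk p (a1, a2)),
      (∀ r ∈ w.support, r ∉ S) ∧ a1 ∉ dirty := by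
    rintro ⟨x, z⟩ hp
    by_cases hx : x ∈ dirty
    · by_cases hall : (Sx x).card = n
      · -- all faults in this cube; cross out directly
        have hSfull : ∀ p ∈ S, p.1 = x := by
          have himg : (Sx x).image (fun z => ((x, z) : V n × V n)) = S := by
            apply Finset.eq_of_subset_of_card_le
            · intro p hp'
              obtain ⟨a, ha, rfl⟩ := Finset.mem_image.1 hp'
              exact (hSxmem x a).1 ha
            · rw [Finset.card_image_of_injective _ (hprodinj x)]
              omega
          intro p hp'
          rw [← himg] at hp'
          obtain ⟨a, _, rfl⟩ := Finset.mem_image.1 hp'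
          rfl
        have hnotdirty : ∀ y : V n, y ≠ x → y ∉ dirty := by
          intro y hy hc
          obtain ⟨p, hpS, hp1⟩ := Finset.mem_image.1 hc
          exact hy (by rw [← hp1]; exact hSfull _ hpS)
        by_cases hzx : z = x
        · subst hzx
          refine ⟨bcomp n z, bcomp n z,
            SimpleGraph.Walk.cons (hcn_adj_comp hn z) SimpleGraph.Walk.nil, ?_, ?_⟩
          · intro r hr
            simp only [SimpleGraph.Walk.support_cons, SimpleGraph.Walk.support_nil] at hr
            rcases List.mem_cons.1 hr with rfl | hr
            · exact hp
            · simp only [List.mem_singleton] at hr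
              subst hr
              intro hc
              exact bcomp_ne hn z (hSfull _ hc)
          · exact hnotdirty _ (bcomp_ne hn z)
        · refine ⟨z, x, SimpleGraph.Walk.cons (hcn_adj_cross (fun h => hzx h.symm))
            SimpleGraph.Walk.nil, ?_, ?_⟩
          · intro r hr
            simp only [SimpleGraph.Walk.support_cons, SimpleGraph.Walk.support_nil] at hr
            rcases List.mem_cons.1 hr with rfl | hr
            · exact hp
            · simp only [List.mem_singleton] at hr
              subst hr
              intro hc
              exact hzx (hSfull _ hc)
          · exact hnotdirty _ hzx
      · -- partial faults in this cube
        have hslt : (Sx x).card < n := lt_of_le_of_ne (le_trans (hSxcard x) hS) hall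
        have hs1 : 1 ≤ (Sx x).card := by
          obtain ⟨⟨p1, p2⟩, hpS, hp1⟩ := Finset.mem_image.1 hx
          simp only at hp1
          subst hp1
          exact Finset.card_pos.2 ⟨p2, (hSxmem _ p2).2 hpS⟩
        have hn2 : 2 ≤ n := by omega
        -- count: dirty.erase x is small
        have hfiltercard : (S.filter (fun p => p.1 = x)).card = (Sx x).card := by
          have : S.filter (fun p => p.1 = x) = (Sx x).image (fun z => (x, z)) := by
            ext p
            simp only [Finset.mem_filter, Finset.mem_image, hSxmem]
            obtain ⟨p1, p2⟩ := p
            simp only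
            constructor
            · rintro ⟨hpS, hp1⟩
              subst hp1
              exact ⟨p2, hpS, rfl⟩
            · rintro ⟨a, ha, ha2⟩
              have h1 : x = p1 := congrArg Prod.fst ha2
              have h2 : a = p2 := congrArg Prod.snd ha2
              subst h1
              subst h2
              exact ⟨ha, rfl⟩
          rw [this, Finset.card_image_of_injective _ (hprodinj x)]
        have herase : (dirty.erase x).card ≤ n - (Sx x).card := by
          have hsub : dirty.erase x ⊆ (S.filter (fun p => ¬ p.1 = x)).image Prod.fst := by
            intro y hy
            obtain ⟨hyx, hyd⟩ := Finset.mem_erase.1 hy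
            obtain ⟨p, hpS, rfl⟩ := Finset.mem_image.1 hyd
            exact Finset.mem_image.2 ⟨p, Finset.mem_filter.2 ⟨hpS, hyx⟩, rfl⟩
          have h1 := Finset.card_le_card hsub
          have h2 : ((S.filter (fun p => ¬ p.1 = x)).image Prod.fst).card ≤
              (S.filter (fun p => ¬ p.1 = x)).card := Finset.card_image_le
          have h3 := Finset.card_filter_add_card_filter_not (s := S)
            (p := fun p => p.1 = x)
          omega
        have hbad : ((Sx x) ∪ insert x (dirty.erase x)).card < Fintype.card (V n) := by
          rw [card_V]
          have h1 := Finset.card_union_le (Sx x) (insert x (dirty.erase x))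
          have h2 := Finset.card_insert_le x (dirty.erase x)
          have h3 := two_le_pow hn2
          omega
        obtain ⟨z', hz'⟩ := exists_not_mem _ hbad
        simp only [Finset.mem_union, Finset.mem_insert, not_or] at hz'
        obtain ⟨hz'S, hz'x, hz'd⟩ := hz'
        have hz'dirty : z' ∉ dirty := fun hc => hz'd (Finset.mem_erase.2 ⟨hz'x, hc⟩)
        have hzS : z ∉ Sx x := fun hc => hp ((hSxmem x z).1 hc)
        obtain ⟨w1, hw1⟩ := inside x hslt z z' hzS hz'S
        refine ⟨z', x, w1.append (SimpleGraph.Walk.cons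
          (hcn_adj_cross (fun h => hz'x h.symm)) SimpleGraph.Walk.nil), ?_, hz'dirty⟩
        intro r hr
        rw [SimpleGraph.Walk.mem_support_append_iff] at hr
        rcases hr with hr | hr
        · exact hw1 r hr
        · simp only [SimpleGraph.Walk.support_cons, SimpleGraph.Walk.support_nil] at hr
          rcases List.mem_cons.1 hr with rfl | hr
          · exact fun hc => hz'S ((hSxmem x z').2 hc)
          · simp only [List.mem_singleton] at hr
            subst hr
            exact hdirty z' hz'dirty x
    · exact ⟨x, z, SimpleGraph.Walk.nil, by
        intro r hr
        simp only [SimpleGraph.Walk.support_nil, List.mem_singleton] at hr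
        subst hr
        exact hp, hx⟩
  have cc : ∀ x y zx zy, x ∉ dirty → y ∉ dirty →
      ∃ w : (HCN n).Walk (x, zx) (y, zy), ∀ r ∈ w.support, r ∉ S := by
    intro x y zx zy hx hy
    have hSx0 : ∀ z, z ∉ Sx x := fun z hc => hdirty x hx z ((hSxmem x z).1 hc)
    have hSy0 : ∀ z, z ∉ Sx y := fun z hc => hdirty y hy z ((hSxmem y z).1 hc)
    have hcx : (Sx x).card < n := by
      have : Sx x = ∅ := Finset.eq_empty_iff_forall_notMem.2 hSx0
      rw [this]; simp; omega
    have hcy : (Sx y).card < n := by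
      have : Sx y = ∅ := Finset.eq_empty_iff_forall_notMem.2 hSy0
      rw [this]; simp; omega
    by_cases hxy : x = y
    · subst hxy
      exact inside x hcx zx zy (hSx0 zx) (hSy0 zy)
    · obtain ⟨w1, hw1⟩ := inside x hcx zx y (hSx0 zx) (hSx0 y)
      obtain ⟨w2, hw2⟩ := inside y hcy x zy (hSy0 x) (hSy0 zy)
      refine ⟨w1.append (SimpleGraph.Walk.cons (hcn_adj_cross hxy) w2), ?_⟩
      intro r hr
      rw [SimpleGraph.Walk.mem_support_append_iff] at hr
      rcases hr with hr | hr
      · exact hw1 r hr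
      · rw [SimpleGraph.Walk.support_cons] at hr
        rcases List.mem_cons.1 hr with rfl | hr
        · exact hdirty x hx y
        · exact hw2 r hr
  obtain ⟨a1, a2, wu, hwu, ha⟩ := escape u hu
  obtain ⟨b1, b2, wv, hwv, hb⟩ := escape v hv
  obtain ⟨wm, hwm⟩ := cc a1 b1 a2 b2 ha hb
  refine ⟨wu.append (wm.append wv.reverse), ?_⟩
  intro r hr
  rw [SimpleGraph.Walk.mem_support_append_iff] at hr
  rcases hr with hr | hr
  · exact hwu r hr
  · rw [SimpleGraph.Walk.mem_support_append_iff] at hr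
    rcases hr with hr | hr
    · exact hwm r hr
    · rw [SimpleGraph.Walk.support_reverse, List.mem_reverse] at hr
      exact hwv r hr

/-- main edge-fault lemma for HCN -/
lemma hcn_fault_edge {n : ℕ} (hn : 1 ≤ n) (F : Finset (Sym2 (V n × V n))) (hF : F.card ≤ n)
    (u v : V n × V n) :
    ∃ w : (HCN n).Walk u v, ∀ e ∈ w.edges, e ∉ F := by
  set Fx : V n → Finset (Sym2 (V n)) :=
    fun x => Finset.univ.filter
      (fun e' => e'.map (fun z => ((x, z) : V n × V n)) ∈ F) with hFxdef
  have hFxmem : ∀ x e', e' ∈ Fx x ↔ e'.map (fun z => ((x, z) : V n × V n)) ∈ F := by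
    intro x e'; simp [hFxdef]
  have hprodinj : ∀ x : V n, Function.Injective (fun z : V n => ((x, z) : V n × V n)) :=
    fun x a b h => congrArg Prod.snd h
  have hFxcard : ∀ x, (Fx x).card ≤ F.card := by
    intro x
    refine Finset.card_le_card_of_injOn (fun e' => e'.map (fun z => (x, z))) ?_ ?_
    · intro e' he'; exact (hFxmem x e').1 he'
    · intro e1 _ e2 _ h
      exact Sym2.map.injective (hprodinj x) h
  have inside : ∀ x, (Fx x).card < n → ∀ z z',
      ∃ w : (HCN n).Walk (x, z) (x, z'), ∀ e ∈ w.edges, e ∉ F := by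
    intro x hx z z'
    obtain ⟨w, hw⟩ := qn_fault_edge n (Fx x) (Or.inl hx) z z'
    refine ⟨w.map ⟨fun a => (x, a), fun h => hcn_adj_inner x h⟩, ?_⟩
    intro e he
    rw [SimpleGraph.Walk.edges_map, List.mem_map] at he
    obtain ⟨e', he', rfl⟩ := he
    exact fun hc => hw e' he' ((hFxmem x e').2 hc)
  by_cases hbig : ∃ x, n ≤ (Fx x).card
  · -- all faults are inside one cube
    obtain ⟨x, hx⟩ := hbig
    have hxcard : (Fx x).card = n := le_antisymm (le_trans (hFxcard x) hF) hx
    have himg : (Fx x).image (fun e' => e'.map (fun z => ((x, z) : V n × V n))) = F := by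
      apply Finset.eq_of_subset_of_card_le
      · intro e he
        obtain ⟨e', he', rfl⟩ := Finset.mem_image.1 he
        exact (hFxmem x e').1 he'
      · rw [Finset.card_image_of_injective _ (Sym2.map.injective (hprodinj x)), hxcard]
        exact hF
    have hshape : ∀ e ∈ F, ∃ e' : Sym2 (V n), e = e'.map (fun z => ((x, z) : V n × V n)) := by
      intro e he
      rw [← himg] at he
      obtain ⟨e', _, rfl⟩ := Finset.mem_image.1 he
      exact ⟨e', rfl⟩
    have hcross : ∀ p q : V n × V n, p.1 ≠ q.1 → s(p, q) ∉ F := by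
      intro p q hpq hc
      obtain ⟨e', he'⟩ := hshape _ hc
      obtain ⟨a, b⟩ := e'
      rw [Sym2.map_pair_eq] at he'
      rcases Sym2.eq_iff.1 he' with ⟨h1, h2⟩ | ⟨h1, h2⟩ <;>
        exact hpq (((congrArg Prod.fst h1).trans (congrArg Prod.fst h2).symm))
    have hother : ∀ y, y ≠ x → Fx y = ∅ := by
      intro y hy
      rw [Finset.eq_empty_iff_forall_notMem]
      intro e' he'
      have hin := (hFxmem y e').1 he'
      obtain ⟨e'', he''⟩ := hshape _ hin
      obtain ⟨a, b⟩ := e'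
      obtain ⟨r, t⟩ := e''
      rw [Sym2.map_pair_eq, Sym2.map_pair_eq] at he''
      rcases Sym2.eq_iff.1 he'' with ⟨h1, _⟩ | ⟨h1, _⟩ <;>
        exact hy (congrArg Prod.fst h1)
    have hzero : ∀ y, y ≠ x → (Fx y).card < n := by
      intro y hy
      rw [hother y hy]
      simp; omega
    have escape : ∀ p : V n × V n, ∃ (a1 a2 : V n) (w : (HCN n).Walk p (a1, a2)),
        (∀ e ∈ w.edges, e ∉ F) ∧ a1 ≠ x := by
      rintro ⟨y, z⟩
      by_cases hyx : y = x
      · subst hyx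
        by_cases hzy : z = y
        · subst hzy
          refine ⟨bcomp n z, bcomp n z,
            SimpleGraph.Walk.cons (hcn_adj_comp hn z) SimpleGraph.Walk.nil, ?_,
            bcomp_ne hn z⟩
          intro e he
          simp only [SimpleGraph.Walk.edges_cons, SimpleGraph.Walk.edges_nil] at he
          rcases List.mem_cons.1 he with rfl | he
          · exact hcross _ _ (fun h => bcomp_ne hn z h.symm)
          · simp at he
        · refine ⟨z, y, SimpleGraph.Walk.cons (hcn_adj_cross (fun h => hzy h.symm))
            SimpleGraph.Walk.nil, ?_, hzy⟩
          intro e he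
          simp only [SimpleGraph.Walk.edges_cons, SimpleGraph.Walk.edges_nil] at he
          rcases List.mem_cons.1 he with rfl | he
          · exact hcross _ _ (fun h => hzy h.symm)
          · simp at he
      · exact ⟨y, z, SimpleGraph.Walk.nil, by intro e he; simp at he, hyx⟩
    obtain ⟨a1, a2, wu, hwu, ha⟩ := escape u
    obtain ⟨b1, b2, wv, hwv, hb⟩ := escape v
    by_cases hab : a1 = b1
    · subst hab
      obtain ⟨wm, hwm⟩ := inside a1 (hzero a1 ha) a2 b2
      refine ⟨wu.append (wm.append wv.reverse), ?_⟩
      intro e he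
      rw [SimpleGraph.Walk.edges_append, List.mem_append] at he
      rcases he with he | he
      · exact hwu e he
      · rw [SimpleGraph.Walk.edges_append, List.mem_append] at he
        rcases he with he | he
        · exact hwm e he
        · rw [SimpleGraph.Walk.edges_reverse, List.mem_reverse] at he
          exact hwv e he
    · obtain ⟨w1, hw1⟩ := inside a1 (hzero a1 ha) a2 b1
      obtain ⟨w2, hw2⟩ := inside b1 (hzero b1 hb) a1 b2
      refine ⟨wu.append ((w1.append (SimpleGraph.Walk.cons (hcn_adj_cross hab) w2)).append
        wv.reverse), ?_⟩
      intro e he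
      rw [SimpleGraph.Walk.edges_append, List.mem_append] at he
      rcases he with he | he
      · exact hwu e he
      rw [SimpleGraph.Walk.edges_append, List.mem_append] at he
      rcases he with he | he
      · rw [SimpleGraph.Walk.edges_append, List.mem_append] at he
        rcases he with he | he
        · exact hw1 e he
        · simp only [SimpleGraph.Walk.edges_cons] at he
          rcases List.mem_cons.1 he with rfl | he
          · exact hcross _ _ hab
          · exact hw2 e he
      · rw [SimpleGraph.Walk.edges_reverse, List.mem_reverse] at he
        exact hwv e he
  · -- all cubes are internally fine
    push_neg at hbig
    set Gq : SimpleGraph (V n) :=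
      { Adj := fun x y => x ≠ y ∧ (s(((x, y) : V n × V n), ((y, x) : V n × V n)) ∉ F ∨
          (y = bcomp n x ∧ s(((x, x) : V n × V n), ((y, y) : V n × V n)) ∉ F)),
        symm := by
          constructor
          rintro x y ⟨hxy, h⟩
          refine ⟨hxy.symm, ?_⟩
          rcases h with h | ⟨hb, h⟩
          · left
            rw [Sym2.eq_swap]
            exact h
          · right
            constructor
            · rw [hb]; funext i; simp [bcomp]
            · rw [Sym2.eq_swap]
              exact h
        loopless := ⟨fun x h => h.1 rfl⟩ } with hGqdef
    have hGqreach : ∀ x y : V n, Gq.Reachable x y := by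
      intro x y
      by_contra hr
      set A : Finset (V n) := Finset.univ.filter (fun a => Gq.Reachable x a) with hAdef
      have hxA : x ∈ A := Finset.mem_filter.2 ⟨Finset.mem_univ _, SimpleGraph.Reachable.refl x⟩
      have hyA : y ∉ A := fun hc => hr (Finset.mem_filter.1 hc).2
      have hcut : ∀ a ∈ A, ∀ b, b ∉ A → ¬ Gq.Adj a b := by
        intro a ha b hb hadj
        exact hb (Finset.mem_filter.2 ⟨Finset.mem_univ _,
          ((Finset.mem_filter.1 ha).2).trans hadj.reachable⟩)
      have hedge : ∀ a ∈ A, ∀ b, b ∉ A → s(((a, b) : V n × V n), ((b, a) : V n × V n)) ∈ F := by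
        intro a ha b hb
        by_contra hc
        have hne : a ≠ b := fun h => hb (h ▸ ha)
        exact hcut a ha b hb ⟨hne, Or.inl hc⟩
      have hinj : (A ×ˢ Aᶜ).card ≤ F.card := by
        refine Finset.card_le_card_of_injOn
          (fun p => s(((p.1, p.2) : V n × V n), ((p.2, p.1) : V n × V n))) ?_ ?_
        · rintro ⟨a, b⟩ hab
          rw [Finset.mem_coe, Finset.mem_product] at hab
          exact hedge a hab.1 b (Finset.mem_compl.1 hab.2)
        · rintro ⟨a, b⟩ hab ⟨a', b'⟩ hab' h
          rw [Finset.mem_coe, Finset.mem_product] at hab hab'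
          simp only at h
          rcases Sym2.eq_iff.1 h with ⟨h1, h2⟩ | ⟨h1, h2⟩
          · exact Prod.ext (congrArg Prod.fst h1) (congrArg Prod.snd h1)
          · exfalso
            have hab1 : a = b' := congrArg Prod.fst h1
            have : a ∈ A := hab.1
            rw [hab1] at this
            exact (Finset.mem_compl.1 hab'.2) this
      have hprod : (A ×ˢ Aᶜ).card = A.card * Aᶜ.card := Finset.card_product A Aᶜ
      have hsum : A.card + Aᶜ.card = 2^n := by
        rw [Finset.card_add_card_compl, card_V]
      have hA1 : 1 ≤ A.card := Finset.card_pos.2 ⟨x, hxA⟩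
      have hB1 : 1 ≤ Aᶜ.card := Finset.card_pos.2 ⟨y, Finset.mem_compl.2 hyA⟩
      by_cases hn2 : 2 ≤ n
      · have h2 := two_le_pow hn2
        obtain ⟨k, hk⟩ := Nat.exists_eq_add_of_le hA1
        obtain ⟨l, hl⟩ := Nat.exists_eq_add_of_le hB1
        have hexp : (1 + k) * (1 + l) = 1 + k + l + k * l := by ring
        rw [hk, hl] at hprod hsum
        omega
      · have hn1 : n = 1 := by omega
        have hne : x ≠ y := fun h => hyA (h ▸ hxA)
        have hby : y = bcomp n x := by
          subst hn1
          have h0 : x 0 ≠ y 0 := by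
            intro h
            apply hne
            funext j
            rw [Fin.eq_zero j]
            exact h
          funext i
          rw [Fin.eq_zero i]
          cases hx0 : x 0 <;> cases hy0 : y 0 <;> simp [bcomp, hx0, hy0] <;>
            simp [hx0, hy0] at h0
        have he1 : s(((x, y) : V n × V n), ((y, x) : V n × V n)) ∈ F := hedge x hxA y hyA
        have he2 : s(((x, x) : V n × V n), ((y, y) : V n × V n)) ∈ F := by
          by_contra hc
          exact hcut x hxA y hyA ⟨hne, Or.inr ⟨hby, hc⟩⟩
        have hne2 : s(((x, y) : V n × V n), ((y, x) : V n × V n)) ≠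
            s(((x, x) : V n × V n), ((y, y) : V n × V n)) := by
          intro h
          rcases Sym2.eq_iff.1 h with ⟨h1, _⟩ | ⟨h1, _⟩
          · exact hne ((congrArg Prod.snd h1).symm : x = y)
          · exact hne (congrArg Prod.fst h1)
        have := Finset.one_lt_card.2 ⟨_, he1, _, he2, hne2⟩
        omega
    have step : ∀ x y : V n, Gq.Adj x y → ∀ zx zy,
        ∃ w : (HCN n).Walk (x, zx) (y, zy), ∀ e ∈ w.edges, e ∉ F := by
      rintro x y ⟨hxy, hcase⟩ zx zy
      rcases hcase with h | ⟨hb, h⟩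
      · obtain ⟨w1, hw1⟩ := inside x (hbig x) zx y
        obtain ⟨w2, hw2⟩ := inside y (hbig y) x zy
        refine ⟨w1.append (SimpleGraph.Walk.cons (hcn_adj_cross hxy) w2), ?_⟩
        intro e he
        rw [SimpleGraph.Walk.edges_append, List.mem_append] at he
        rcases he with he | he
        · exact hw1 e he
        · simp only [SimpleGraph.Walk.edges_cons] at he
          rcases List.mem_cons.1 he with rfl | he
          · exact h
          · exact hw2 e he
      · obtain ⟨w1, hw1⟩ := inside x (hbig x) zx x
        obtain ⟨w2, hw2⟩ := inside y (hbig y) y zy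
        have hadj : (HCN n).Adj (x, x) (y, y) := by
          rw [hb]
          exact hcn_adj_comp hn x
        refine ⟨w1.append (SimpleGraph.Walk.cons hadj w2), ?_⟩
        intro e he
        rw [SimpleGraph.Walk.edges_append, List.mem_append] at he
        rcases he with he | he
        · exact hw1 e he
        · simp only [SimpleGraph.Walk.edges_cons] at he
          rcases List.mem_cons.1 he with rfl | he
          · exact h
          · exact hw2 e he
    have main : ∀ (x y : V n) (p : Gq.Walk x y) (zx zy : V n),
        ∃ w : (HCN n).Walk (x, zx) (y, zy), ∀ e ∈ w.edges, e ∉ F := by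
      intro x y p
      induction p with
      | nil =>
        intro zx zy
        exact inside _ (hbig _) zx zy
      | @cons a b c hadj p ih =>
        intro zx zy
        obtain ⟨w1, hw1⟩ := step a b hadj zx b
        obtain ⟨w2, hw2⟩ := ih b zy
        refine ⟨w1.append w2, ?_⟩
        intro e he
        rw [SimpleGraph.Walk.edges_append, List.mem_append] at he
        rcases he with he | he
        · exact hw1 e he
        · exact hw2 e he
    obtain ⟨ux, uz⟩ := u
    obtain ⟨vx, vz⟩ := v
    obtain ⟨p⟩ := hGqreach ux vx
    exact main ux vx p uz vz

lemma induce_reachable_of_walk {α : Type*} {G : SimpleGraph α} {K : Set α} :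
    ∀ {u v : α} (w : G.Walk u v), (∀ z ∈ w.support, z ∈ K) →
    ∀ (hu : u ∈ K) (hv : v ∈ K), (G.induce K).Reachable ⟨u, hu⟩ ⟨v, hv⟩ := by
  intro u v w
  induction w with
  | nil =>
    intro h hu hv
    exact SimpleGraph.Reachable.refl _
  | @cons a b c hadj p ih =>
    intro h hu hv
    have hb : b ∈ K := h b (by
      rw [SimpleGraph.Walk.support_cons]
      exact List.mem_cons_of_mem _ p.start_mem_support)
    have hstep : (G.induce K).Adj ⟨a, hu⟩ ⟨b, hb⟩ := hadj
    exact hstep.reachable.trans (ih (fun z hz => h z (by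
      rw [SimpleGraph.Walk.support_cons]
      exact List.mem_cons_of_mem _ hz)) hb hv)

lemma first_step {α : Type*} {G : SimpleGraph α} {u v : α} (h : G.Reachable u v)
    (hne : u ≠ v) : ∃ b, G.Adj u b := by
  obtain ⟨p⟩ := h
  cases p with
  | nil => exact absurd rfl hne
  | cons h _ => exact ⟨_, h⟩

/-- neighbors of the all-zero vertex -/
lemma hcn_nbr {n : ℕ} {b : V n × V n}
    (h : (HCN n).Adj ((fun _ => false : V n), (fun _ => false : V n)) b) :
    (∃ i : Fin n, b = ((fun _ => false : V n),
      Function.update (fun _ => false : V n) i true)) ∨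
      b = ((fun _ => true : V n), (fun _ => true : V n)) := by
  obtain ⟨hne, hcase⟩ := h
  obtain ⟨b1, b2⟩ := b
  rcases hcase with ⟨h1, h2⟩ | h | h | h | h
  · left
    simp only at h1 h2
    obtain ⟨i, hi⟩ := qn_adj_iff.1 h2
    refine ⟨i, ?_⟩
    rw [← h1]
    simp only [Prod.mk.injEq, true_and]
    rw [hi]
    rfl
  · exact absurd rfl h.1
  · right
    simp only at h
    rw [h.2]
    simp only [Prod.mk.injEq]
    constructor <;> · funext i; simp [bcomp]
  · simp only at h
    exfalso
    apply h.1
    have e1 : b2 = (fun _ => false : V n) := (congrArg Prod.fst h.2).symm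
    have e2 : b1 = (fun _ => false : V n) := (congrArg Prod.snd h.2).symm
    rw [e1, e2]
  · right
    simp only at h
    obtain ⟨hb12, hb⟩ := h
    have e1 : (fun _ => false : V n) = bcomp n b1 := congrArg Prod.fst hb
    have hb1 : b1 = (fun _ => true : V n) := by
      funext i
      have := congrFun e1 i
      simp [bcomp] at this
      simp [this]
    rw [hb1] at hb12
    rw [hb1, ← hb12]

end S19

open scoped Classical in
/-- κ(HCN_n) = λ(HCN_n) = n+1 for n ≥ 1: removing at most n vertices (or edges)
leaves HCN_n connected, while some set of n+1 vertices (or edges) disconnects it. -/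
theorem stmt19 (n : ℕ) (hn : 1 ≤ n) :
    (∀ S : Finset ((Fin n → Bool) × (Fin n → Bool)), S.card ≤ n →
      ((HCN n).induce {v | v ∉ S}).Connected) ∧
    (∃ S : Finset ((Fin n → Bool) × (Fin n → Bool)), S.card = n + 1 ∧
      ({v | v ∉ S} : Set ((Fin n → Bool) × (Fin n → Bool))).Nonempty ∧
      ¬ ((HCN n).induce {v | v ∉ S}).Connected) ∧
    (∀ F : Finset (Sym2 ((Fin n → Bool) × (Fin n → Bool))), F.card ≤ n →
      ((HCN n).deleteEdges ↑F).Connected) ∧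
    (∃ F : Finset (Sym2 ((Fin n → Bool) × (Fin n → Bool))),
      ↑F ⊆ (HCN n).edgeSet ∧ F.card = n + 1 ∧
      ¬ ((HCN n).deleteEdges ↑F).Connected) := by
  classical
  set x0 : Fin n → Bool := fun _ => false with hx0def
  set e1 : Fin n → Bool := fun _ => true with he1def
  have hx0e1 : x0 ≠ e1 := by
    intro h
    have := congrFun h ⟨0, hn⟩
    simp [hx0def, he1def] at this
  refine ⟨?_, ?_, ?_, ?_⟩
  · -- vertex connectivity lower bound
    intro S hS
    have hcardbig : S.card < Fintype.card ((Fin n → Bool) × (Fin n → Bool)) := by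
      rw [Fintype.card_prod, S19.card_V]
      have h1 := Nat.lt_two_pow_self (n := n)
      have h2 : 2^n ≤ 2^n * 2^n := Nat.le_mul_of_pos_right _ (Nat.two_pow_pos n)
      omega
    obtain ⟨p0, hp0⟩ := S19.exists_not_mem S hcardbig
    haveI : Nonempty ({v | v ∉ S} : Set ((Fin n → Bool) × (Fin n → Bool))) := ⟨⟨p0, hp0⟩⟩
    refine SimpleGraph.Connected.mk ?_
    rintro ⟨a, ha⟩ ⟨b, hb⟩
    obtain ⟨w, hw⟩ := S19.hcn_fault hn S hS (ha : a ∉ S) (hb : b ∉ S)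
    exact S19.induce_reachable_of_walk w (fun z hz => hw z hz) ha hb
  · -- vertex cut of size n+1
    set Sc : Finset ((Fin n → Bool) × (Fin n → Bool)) := (Finset.univ.image fun i : Fin n =>
        ((x0, Function.update x0 i true) : (Fin n → Bool) × (Fin n → Bool))) ∪
        {((e1, e1) : (Fin n → Bool) × (Fin n → Bool))} with hScdef
    have hv0 : ((x0, x0) : (Fin n → Bool) × (Fin n → Bool)) ∉ Sc := by
      rw [hScdef]
      simp only [Finset.mem_union, Finset.mem_image, Finset.mem_singleton, not_or, not_exists]
      constructor
      · rintro i ⟨_, hc⟩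
        have := congrFun (congrArg Prod.snd hc) i
        simp [hx0def] at this
      · intro hc
        exact hx0e1 (congrArg Prod.fst hc)
    have hw0 : ((e1, x0) : (Fin n → Bool) × (Fin n → Bool)) ∉ Sc := by
      rw [hScdef]
      simp only [Finset.mem_union, Finset.mem_image, Finset.mem_singleton, not_or, not_exists]
      constructor
      · rintro i ⟨_, hc⟩
        exact hx0e1 (congrArg Prod.fst hc)
      · intro hc
        exact hx0e1 (congrArg Prod.snd hc)
    refine ⟨Sc, ?_, ?_, ?_⟩
    · rw [hScdef, Finset.card_union_of_disjoint, Finset.card_image_of_injective,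
        Finset.card_univ, Finset.card_singleton, Fintype.card_fin]
      · intro i j hij
        have := congrFun (congrArg Prod.snd hij) i
        simp only [Function.update_self] at this
        by_contra hne
        rw [Function.update_of_ne hne] at this
        simp [hx0def] at this
      · rw [Finset.disjoint_left]
        rintro p hp hp'
        obtain ⟨i, _, rfl⟩ := Finset.mem_image.1 hp
        rw [Finset.mem_singleton] at hp'
        exact hx0e1 (congrArg Prod.fst hp')
    · exact ⟨(x0, x0), hv0⟩
    · intro hcon
      have hreach := hcon.preconnected ⟨(x0, x0), hv0⟩ ⟨(e1, x0), hw0⟩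
      have hne12 : (⟨(x0, x0), hv0⟩ : ({v | v ∉ Sc} : Set _)) ≠ ⟨(e1, x0), hw0⟩ := by
        intro h
        exact hx0e1 (congrArg (Prod.fst ∘ Subtype.val) h)
      obtain ⟨b, hadj⟩ := S19.first_step hreach hne12
      have hadj' : (HCN n).Adj (x0, x0) (b : (Fin n → Bool) × (Fin n → Bool)) := hadj
      have hbS := b.2
      simp only [Set.mem_setOf_eq] at hbS
      apply hbS
      rcases S19.hcn_nbr hadj' with ⟨i, hb⟩ | hb
      · exact Finset.mem_union.2 (Or.inl (Finset.mem_image.2 ⟨i, Finset.mem_univ _, hb.symm⟩))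
      · exact Finset.mem_union.2 (Or.inr (Finset.mem_singleton.2 hb))
  · -- edge connectivity lower bound
    intro F hF
    have hpre : ((HCN n).deleteEdges ↑F).Preconnected := by
      intro a b
      obtain ⟨w, hw⟩ := S19.hcn_fault_edge hn F hF a b
      exact ⟨w.toDeleteEdges ↑F (fun e he hc => hw e he (Finset.mem_coe.1 hc))⟩
    exact SimpleGraph.Connected.mk hpre
  · -- edge cut of size n+1
    refine ⟨(Finset.univ.image fun i : Fin n =>
        s(((x0, x0) : (Fin n → Bool) × (Fin n → Bool)), (x0, Function.update x0 i true))) ∪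
        {s(((x0, x0) : (Fin n → Bool) × (Fin n → Bool)), (e1, e1))}, ?_, ?_, ?_⟩
    · intro e he
      rw [Finset.mem_coe, Finset.mem_union] at he
      rcases he with he | he
      · obtain ⟨i, _, rfl⟩ := Finset.mem_image.1 he
        rw [SimpleGraph.mem_edgeSet]
        have : Function.update x0 i true = Function.update x0 i (!(x0 i)) := by
          simp [hx0def]
        rw [this]
        exact S19.hcn_adj_inner x0 (S19.qn_adj_flip x0 i)
      · rw [Finset.mem_singleton] at he
        subst he
        rw [SimpleGraph.mem_edgeSet]
        have : e1 = bcomp n x0 := by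
          funext i
          simp [hx0def, he1def, bcomp]
        rw [this]
        exact S19.hcn_adj_comp hn x0
    · rw [Finset.card_union_of_disjoint, Finset.card_image_of_injective, Finset.card_univ,
        Finset.card_singleton, Fintype.card_fin]
      · intro i j hij
        have hne0 : ∀ k : Fin n, ((x0, Function.update x0 k true) :
            (Fin n → Bool) × (Fin n → Bool)) ≠ (x0, x0) := by
          intro k hc
          have := congrFun (congrArg Prod.snd hc) k
          simp [hx0def] at this
        rcases Sym2.eq_iff.1 hij with ⟨_, h2⟩ | ⟨h1, _⟩
        · have := congrFun (congrArg Prod.snd h2) i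
          simp only [Function.update_self] at this
          by_contra hne
          rw [Function.update_of_ne hne] at this
          simp [hx0def] at this
        · exact absurd h1.symm (hne0 j)
      · rw [Finset.disjoint_left]
        rintro p hp hp'
        obtain ⟨i, _, rfl⟩ := Finset.mem_image.1 hp
        rw [Finset.mem_singleton] at hp'
        rcases Sym2.eq_iff.1 hp' with ⟨_, h2⟩ | ⟨h1, _⟩
        · exact hx0e1 (congrArg Prod.fst h2)
        · have := congrFun (congrArg Prod.fst h1) ⟨0, hn⟩
          simp [hx0def, he1def] at this
    · intro hcon
      have hne12 : ((x0, x0) : (Fin n → Bool) × (Fin n → Bool)) ≠ (e1, x0) := by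
        intro h
        exact hx0e1 (congrArg Prod.fst h)
      have hreach := hcon.preconnected (x0, x0) (e1, x0)
      obtain ⟨b, hadj⟩ := S19.first_step hreach hne12
      rw [SimpleGraph.deleteEdges_adj] at hadj
      obtain ⟨hadj', hnotF⟩ := hadj
      apply hnotF
      rw [Finset.mem_coe, Finset.mem_union]
      rcases S19.hcn_nbr hadj' with ⟨i, hb⟩ | hb
      · exact Or.inl (Finset.mem_image.2 ⟨i, Finset.mem_univ _, by rw [hb]⟩)
      · exact Or.inr (Finset.mem_singleton.2 (by rw [hb]))
end
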